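/- arXiv:1609.03241 — 4 statements merged into one kernel-verified Lean document; each statement's English description precedes it below -/
import Mathlib

section
/- For p ≥ 3 and b ≥ 1, lim_{v→∞} (log v) · [∫₀¹ λ^{p/2−2}(log(1/λ))^{b−1} e^{−vλ/2} dλ] / [∫₀¹ λ^{p/2−2}(log(1/λ))^{b} e^{−vλ/2} dλ] = 1. -/
set_option maxHeartbeats 1000000

open MeasureTheory Filter Real Set

lemma aux_log_pow_le (β δ : ℝ) (hβ : 0 ≤ β) (hδ : 0 < δ) :
    ∃ C, 0 < C ∧ ∀ x ∈ Ioo (0:ℝ) 1, Real.log (1/x) ^ β ≤ C * x ^ (-δ) := by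
  have h := tendsto_rpow_mul_exp_neg_mul_atTop_nhds_zero β δ hδ
  have h1 : ∀ᶠ t in atTop, t ^ β * Real.exp (-δ * t) ≤ 1 :=
    h.eventually (eventually_le_nhds (by norm_num : (0:ℝ) < 1))
  obtain ⟨T, hT⟩ := h1.exists_forall_of_atTop
  set C := max 1 (max 1 T ^ β) with hC
  refine ⟨C, lt_max_of_lt_left one_pos, ?_⟩
  intro x hx
  have hx0 : 0 < x := hx.1
  have hx1 : x < 1 := hx.2
  set t := Real.log (1/x) with ht'
  have htpos : 0 < t := Real.log_pos (by rw [one_div]; exact one_lt_inv_iff₀.mpr ⟨hx0, hx1⟩)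
  have hexp : x ^ (-δ) = Real.exp (δ * t) := by
    rw [Real.rpow_def_of_pos hx0, ht', one_div, Real.log_inv]
    ring_nf
  have key : t ^ β ≤ C * Real.exp (δ * t) := by
    rcases le_or_gt (max 1 T) t with hc | hc
    · have h2 := hT t (le_trans (le_max_right 1 T) hc)
      have h3 : t ^ β * Real.exp (-δ * t) * Real.exp (δ * t) ≤ 1 * Real.exp (δ * t) :=
        mul_le_mul_of_nonneg_right h2 (Real.exp_pos _).le
      have h4 : t ^ β * Real.exp (-δ * t) * Real.exp (δ * t) = t ^ β := by
        rw [mul_assoc, ← Real.exp_add]; simp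
      rw [h4, one_mul] at h3
      calc t ^ β ≤ Real.exp (δ * t) := h3
        _ ≤ C * Real.exp (δ * t) := le_mul_of_one_le_left (Real.exp_pos _).le (le_max_left _ _)
    · have h2 : t ^ β ≤ max 1 T ^ β :=
        Real.rpow_le_rpow htpos.le hc.le hβ
      have h3 : max 1 T ^ β ≤ C := le_max_right _ _
      have h4 : (1:ℝ) ≤ Real.exp (δ * t) :=
        Real.one_le_exp (by positivity)
      calc t ^ β ≤ C := le_trans h2 h3
        _ = C * 1 := (mul_one C).symm
        _ ≤ C * Real.exp (δ * t) := by
            exact mul_le_mul_of_nonneg_left h4 (le_trans zero_le_one (le_max_left _ _))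
  rw [hexp]; exact key

lemma aux_contOn (c β v : ℝ) :
    ContinuousOn (fun x : ℝ => x ^ c * Real.log (1/x) ^ β * Real.exp (-v * x / 2)) (Ioo 0 1) := by
  apply ContinuousOn.mul
  apply ContinuousOn.mul
  · exact fun x hx => (Real.continuousAt_rpow_const x c (Or.inl (ne_of_gt hx.1))).continuousWithinAt
  · apply ContinuousOn.rpow_const
    · exact Real.continuousOn_log.comp (continuousOn_const.div continuousOn_id
        (fun x hx => ne_of_gt hx.1)) (fun x hx => by
          simp only [mem_compl_iff, mem_singleton_iff, one_div]
          exact inv_ne_zero (ne_of_gt hx.1))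
    · intro x hx
      left
      exact ne_of_gt (Real.log_pos (by rw [one_div]; exact one_lt_inv_iff₀.mpr ⟨hx.1, hx.2⟩))
  · exact (Real.continuous_exp.comp (by continuity)).continuousOn

lemma aux_nonneg (c β v : ℝ) (x : ℝ) (hx : x ∈ Ioo (0:ℝ) 1) :
    0 ≤ x ^ c * Real.log (1/x) ^ β * Real.exp (-v * x / 2) := by
  have h1 : (0:ℝ) ≤ x ^ c := (Real.rpow_pos_of_pos hx.1 c).le
  have h2 : (0:ℝ) ≤ Real.log (1/x) ^ β := by
    apply Real.rpow_nonneg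
    exact (Real.log_pos (by rw [one_div]; exact one_lt_inv_iff₀.mpr ⟨hx.1, hx.2⟩)).le
  positivity

lemma aux_integrable (c β v : ℝ) (hc : -1 < c) (hβ : 0 ≤ β) (hv : 0 ≤ v) :
    IntegrableOn (fun x : ℝ => x ^ c * Real.log (1/x) ^ β * Real.exp (-v * x / 2))
      (Ioo (0:ℝ) 1) := by
  obtain ⟨C, hC, hbd⟩ := aux_log_pow_le β ((c+1)/2) hβ (by linarith)
  have hint : IntegrableOn (fun x : ℝ => C * x ^ ((c-1)/2)) (Ioo (0:ℝ) 1) := by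
    apply Integrable.const_mul
    have h := intervalIntegral.intervalIntegrable_rpow' (a := 0) (b := 1)
      (r := (c-1)/2) (by linarith)
    rw [intervalIntegrable_iff_integrableOn_Ioo_of_le (by norm_num)] at h
    exact h
  apply Integrable.mono' hint ((aux_contOn c β v).aestronglyMeasurable measurableSet_Ioo)
  rw [ae_restrict_iff' measurableSet_Ioo]
  filter_upwards with x hx
  rw [Real.norm_eq_abs, abs_of_nonneg (aux_nonneg c β v x hx)]
  have h1 : Real.log (1/x) ^ β ≤ C * x ^ (-((c+1)/2)) := hbd x hx
  have h2 : Real.exp (-v * x / 2) ≤ 1 := Real.exp_le_one_iff.mpr (by nlinarith [hx.1.le])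
  have h3 : (0:ℝ) < x ^ c := Real.rpow_pos_of_pos hx.1 c
  calc x ^ c * Real.log (1/x) ^ β * Real.exp (-v * x / 2)
      ≤ x ^ c * (C * x ^ (-((c+1)/2))) * 1 := by
        apply mul_le_mul
        · exact mul_le_mul_of_nonneg_left h1 h3.le
        · exact h2
        · exact (Real.exp_pos _).le
        · have h4 : (0:ℝ) < x ^ (-((c+1)/2)) := Real.rpow_pos_of_pos hx.1 _
          positivity
    _ = C * x ^ ((c-1)/2) := by
        rw [mul_one, ← mul_assoc, mul_comm (x ^ c) C, mul_assoc, ← Real.rpow_add hx.1]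
        ring_nf

lemma aux_lower (c β : ℝ) (hc : -1 < c) (hβ : 0 ≤ β) :
    ∃ C, 0 < C ∧ ∀ v : ℝ, Real.exp 2 ≤ v →
      C * v ^ (-(c+1)) ≤
        ∫ x in Ioo (0:ℝ) 1, x ^ c * Real.log (1/x) ^ β * Real.exp (-v*x/2) := by
  refine ⟨min 1 ((2:ℝ) ^ c) * Real.exp (-1), by positivity, ?_⟩
  intro v hv
  have hv3 : (3:ℝ) ≤ v := le_trans (by nlinarith [Real.add_one_le_exp 2]) hv
  have hv0 : (0:ℝ) < v := by linarith
  have hsub : Ioo (1/v) (2/v) ⊆ Ioo (0:ℝ) 1 := by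
    intro x hx
    constructor
    · exact lt_trans (by positivity) hx.1
    · exact lt_trans hx.2 (by rw [div_lt_one hv0]; linarith)
  set f := fun x : ℝ => x ^ c * Real.log (1/x) ^ β * Real.exp (-v*x/2) with hf
  have hint : IntegrableOn f (Ioo (0:ℝ) 1) := aux_integrable c β v hc hβ (by linarith)
  set m := min 1 ((2:ℝ) ^ c) * v ^ (-c) * Real.exp (-1) with hm
  have hptwise : ∀ x ∈ Ioo (1/v) (2/v), m ≤ f x := by
    intro x hx
    have hx0 : 0 < x := lt_trans (by positivity) hx.1
    have hxup : x < 2/v := hx.2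
    have h1 : min 1 ((2:ℝ) ^ c) * v ^ (-c) ≤ x ^ c := by
      rcases le_or_gt 0 c with hcs | hcs
      · have : (1/v) ^ c ≤ x ^ c := Real.rpow_le_rpow (by positivity) hx.1.le hcs
        have heq : (1/v) ^ c = v ^ (-c) := by
          rw [one_div, ← Real.rpow_neg_one, ← Real.rpow_mul hv0.le]
          ring_nf
        calc min 1 ((2:ℝ) ^ c) * v ^ (-c) ≤ 1 * v ^ (-c) := by
              apply mul_le_mul_of_nonneg_right (min_le_left _ _)
              positivity
          _ = (1/v) ^ c := by rw [one_mul, heq]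
          _ ≤ x ^ c := this
      · have h2 : (2/v) ^ c ≤ x ^ c := by
          apply Real.rpow_le_rpow_of_nonpos hx0 hxup.le hcs.le
        have heq : (2/v) ^ c = 2 ^ c * v ^ (-c) := by
          rw [div_eq_mul_inv, Real.mul_rpow (by norm_num) (by positivity),
            ← Real.rpow_neg_one v, ← Real.rpow_mul hv0.le]
          ring_nf
        calc min 1 ((2:ℝ) ^ c) * v ^ (-c) ≤ 2 ^ c * v ^ (-c) := by
              apply mul_le_mul_of_nonneg_right (min_le_right _ _)
              positivity
          _ = (2/v) ^ c := heq.symm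
          _ ≤ x ^ c := h2
    have h2 : (1:ℝ) ≤ Real.log (1/x) ^ β := by
      have hlog2 : Real.log 2 < 1 := by
        have := Real.log_two_lt_d9; linarith
      have hlv : (2:ℝ) ≤ Real.log v := (Real.le_log_iff_exp_le hv0).mpr hv
      have hL : (1:ℝ) ≤ Real.log (1/x) := by
        have : v/2 ≤ 1/x := by
          rw [div_le_div_iff₀ (by norm_num) hx0]
          have := hxup
          rw [lt_div_iff₀ hv0] at this
          linarith
        have hlog : Real.log (v/2) ≤ Real.log (1/x) :=
          Real.log_le_log (by positivity) this
        rw [Real.log_div (ne_of_gt hv0) (by norm_num)] at hlog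
        linarith
      calc (1:ℝ) = 1 ^ β := (Real.one_rpow β).symm
        _ ≤ Real.log (1/x) ^ β := Real.rpow_le_rpow (by norm_num) hL hβ
    have h3 : Real.exp (-1) ≤ Real.exp (-v*x/2) := by
      apply Real.exp_le_exp.mpr
      rw [lt_div_iff₀ hv0] at hxup
      nlinarith
    have hxc : 0 < x ^ c := Real.rpow_pos_of_pos hx0 c
    calc m = (min 1 ((2:ℝ) ^ c) * v ^ (-c)) * 1 * Real.exp (-1) := by rw [hm]; ring
      _ ≤ x ^ c * Real.log (1/x) ^ β * Real.exp (-v*x/2) := by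
          apply mul_le_mul
          · apply mul_le_mul h1 h2 (by norm_num)
            exact hxc.le
          · exact h3
          · positivity
          · positivity
  have hmeas : (volume (Ioo (1/v) (2/v))).toReal = 1/v := by
    rw [Real.volume_Ioo]
    have h21 : 2/v - 1/v = 1/v := by ring
    rw [h21, ENNReal.toReal_ofReal (by positivity)]
  have hkey : m * (1/v) ≤ ∫ x in Ioo (1/v) (2/v), f x := by
    have := setIntegral_ge_of_const_le (μ := volume) measurableSet_Ioo
      measure_Ioo_lt_top.ne hptwise (hint.mono_set hsub)
    rwa [measureReal_def, hmeas, smul_eq_mul, mul_comm (1/v) m] at this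
  have hnn : 0 ≤ᶠ[ae (volume.restrict (Ioo (0:ℝ) 1))] f := by
    rw [EventuallyLE, ae_restrict_iff' measurableSet_Ioo]
    filter_upwards with x hx
    exact aux_nonneg c β v x hx
  have hmono : ∫ x in Ioo (1/v) (2/v), f x ≤ ∫ x in Ioo (0:ℝ) 1, f x :=
    setIntegral_mono_set hint hnn hsub.eventuallyLE
  have hvv : v ^ (-c) * v ^ (-1:ℝ) = v ^ (-(c+1)) := by
    rw [← Real.rpow_add hv0]; ring_nf
  have heq : min 1 ((2:ℝ) ^ c) * Real.exp (-1) * v ^ (-(c+1)) = m * (1/v) := by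
    rw [hm, one_div, ← Real.rpow_neg_one v, ← hvv]; ring
  rw [heq]
  exact le_trans hkey hmono

lemma aux_split (f : ℝ → ℝ) (a : ℝ) (ha : 0 < a) (ha1 : a < 1)
    (hf : IntegrableOn f (Ioo (0:ℝ) 1)) :
    ∫ x in Ioo (0:ℝ) 1, f x = (∫ x in Ioo (0:ℝ) a, f x) + ∫ x in Ico a 1, f x := by
  have hu : Ioo (0:ℝ) a ∪ Ico a 1 = Ioo (0:ℝ) 1 := Ioo_union_Ico_eq_Ioo ha ha1.le
  have hd : Disjoint (Ioo (0:ℝ) a) (Ico a 1) := by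
    rw [Set.disjoint_left]
    intro x hx hx'
    exact absurd hx'.1 (not_le.mpr hx.2)
  rw [← hu]
  exact setIntegral_union hd measurableSet_Ico
    (hf.mono_set (by rw [← hu]; exact subset_union_left))
    (hf.mono_set (by rw [← hu]; exact subset_union_right))

lemma aux_upper (c β ε : ℝ) (hc : -1 < c) (hβ : 1 ≤ β) (hε : 0 < ε) (hε1 : ε < 1) :
    ∃ C, 0 < C ∧ ∃ η, c + 1 < η ∧ ∀ᶠ v : ℝ in atTop,
      (∫ x in Ioo (0:ℝ) 1, x ^ c * Real.log (1/x) ^ β * Real.exp (-v*x/2))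
        ≤ (1+ε) * Real.log v *
            (∫ x in Ioo (0:ℝ) 1, x ^ c * Real.log (1/x) ^ (β-1) * Real.exp (-v*x/2))
          + C * v ^ (-η) := by
  set δ := ε * (c+1) / 2 with hδdef
  have hδ : 0 < δ := by have : 0 < c + 1 := by linarith
                        positivity
  have hδlt : δ < (c+1)/2 := by nlinarith
  obtain ⟨C₀, hC₀, hbd⟩ := aux_log_pow_le β δ (by linarith) hδ
  refine ⟨C₀ / (c + 1 - δ), by have : 0 < c + 1 - δ := by nlinarith
                               positivity,
    (1+ε) * (c+1-δ), by nlinarith, ?_⟩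
  filter_upwards [eventually_ge_atTop (1:ℝ), eventually_gt_atTop (1:ℝ)] with v hv1 hv1'
  have hv0 : (0:ℝ) < v := by linarith
  set a := v ^ (-(1+ε)) with hadef
  have ha0 : 0 < a := Real.rpow_pos_of_pos hv0 _
  have ha1 : a < 1 := Real.rpow_lt_one_of_one_lt_of_neg hv1' (by linarith)
  set f := fun x : ℝ => x ^ c * Real.log (1/x) ^ β * Real.exp (-v*x/2) with hfdef
  set g := fun x : ℝ => x ^ c * Real.log (1/x) ^ (β-1) * Real.exp (-v*x/2) with hgdef
  have hfint : IntegrableOn f (Ioo (0:ℝ) 1) := aux_integrable c β v hc (by linarith) hv0.le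
  have hgint : IntegrableOn g (Ioo (0:ℝ) 1) :=
    aux_integrable c (β-1) v hc (by linarith) hv0.le
  rw [aux_split f a ha0 ha1 hfint]
  have hpart1 : (∫ x in Ioo (0:ℝ) a, f x) ≤ C₀ / (c+1-δ) * v ^ (-((1+ε)*(c+1-δ))) := by
    have hsub : Ioo (0:ℝ) a ⊆ Ioo (0:ℝ) 1 := Ioo_subset_Ioo le_rfl ha1.le
    have hmono : (∫ x in Ioo (0:ℝ) a, f x) ≤ ∫ x in Ioo (0:ℝ) a, C₀ * x ^ (c - δ) := by
      apply setIntegral_mono_on (hfint.mono_set hsub)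
      · apply Integrable.const_mul
        have h := intervalIntegral.intervalIntegrable_rpow' (a := 0) (b := a)
          (r := c - δ) (by nlinarith)
        rw [intervalIntegrable_iff_integrableOn_Ioo_of_le ha0.le] at h
        exact h
      · exact measurableSet_Ioo
      · intro x hx
        have hx' : x ∈ Ioo (0:ℝ) 1 := hsub hx
        have h1 : Real.log (1/x) ^ β ≤ C₀ * x ^ (-δ) := hbd x hx'
        have h2 : Real.exp (-v*x/2) ≤ 1 :=
          Real.exp_le_one_iff.mpr (by nlinarith [hx'.1.le])
        have h3 : (0:ℝ) < x ^ c := Real.rpow_pos_of_pos hx'.1 c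
        have h4 : (0:ℝ) < x ^ (-δ) := Real.rpow_pos_of_pos hx'.1 _
        calc x ^ c * Real.log (1/x) ^ β * Real.exp (-v*x/2)
            ≤ x ^ c * (C₀ * x ^ (-δ)) * 1 := by
              apply mul_le_mul (mul_le_mul_of_nonneg_left h1 h3.le) h2
                (Real.exp_pos _).le (by positivity)
          _ = C₀ * x ^ (c - δ) := by
              rw [mul_one, ← mul_assoc, mul_comm (x ^ c) C₀, mul_assoc,
                ← Real.rpow_add hx'.1]
              ring_nf
    have hcomp : ∫ x in Ioo (0:ℝ) a, C₀ * x ^ (c - δ) =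
        C₀ / (c+1-δ) * v ^ (-((1+ε)*(c+1-δ))) := by
      rw [← integral_Ioc_eq_integral_Ioo, ← intervalIntegral.integral_of_le ha0.le,
        intervalIntegral.integral_const_mul, integral_rpow (Or.inl (by nlinarith))]
      rw [Real.zero_rpow (by nlinarith)]
      rw [hadef, ← Real.rpow_mul hv0.le]
      rw [show (-(1+ε)) * (c - δ + 1) = -((1+ε)*(c+1-δ)) by ring]
      rw [show c - δ + 1 = c + 1 - δ by ring]
      ring
    linarith [hmono, hcomp.le, hcomp.ge]
  have hpart2 : (∫ x in Ico a 1, f x) ≤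
      (1+ε) * Real.log v * ∫ x in Ioo (0:ℝ) 1, g x := by
    have hsub : Ico a 1 ⊆ Ioo (0:ℝ) 1 := fun x hx => ⟨lt_of_lt_of_le ha0 hx.1, hx.2⟩
    have hlogv : 0 ≤ Real.log v := Real.log_nonneg hv1
    have hstep : (∫ x in Ico a 1, f x) ≤ ∫ x in Ico a 1, (1+ε) * Real.log v * g x := by
      apply setIntegral_mono_on (hfint.mono_set hsub)
        ((hgint.mono_set hsub).const_mul _) measurableSet_Ico
      intro x hx
      have hx' : x ∈ Ioo (0:ℝ) 1 := hsub hx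
      have hL : 0 < Real.log (1/x) :=
        Real.log_pos (by rw [one_div]; exact one_lt_inv_iff₀.mpr ⟨hx'.1, hx'.2⟩)
      have hLle : Real.log (1/x) ≤ (1+ε) * Real.log v := by
        have h1 : (1:ℝ)/x ≤ 1/a := one_div_le_one_div_of_le ha0 hx.1
        have h2 : Real.log (1/x) ≤ Real.log (1/a) :=
          Real.log_le_log (one_div_pos.mpr hx'.1) h1
        have h3 : Real.log (1/a) = (1+ε) * Real.log v := by
          rw [one_div, Real.log_inv, hadef, Real.log_rpow hv0]
          ring
        linarith
      have hfg : f x = g x * Real.log (1/x) := by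
        rw [hfdef, hgdef]
        simp only
        rw [show β = (β-1)+1 by ring, Real.rpow_add_one hL.ne']
        ring
      have hg0 : 0 ≤ g x := aux_nonneg c (β-1) v x hx'
      calc f x = g x * Real.log (1/x) := hfg
        _ ≤ g x * ((1+ε) * Real.log v) := mul_le_mul_of_nonneg_left hLle hg0
        _ = (1+ε) * Real.log v * g x := mul_comm _ _
    have hnn : 0 ≤ᶠ[ae (volume.restrict (Ioo (0:ℝ) 1))] g := by
      rw [EventuallyLE, ae_restrict_iff' measurableSet_Ioo]
      filter_upwards with x hx
      exact aux_nonneg c (β-1) v x hx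
    calc (∫ x in Ico a 1, f x) ≤ ∫ x in Ico a 1, (1+ε) * Real.log v * g x := hstep
      _ = (1+ε) * Real.log v * ∫ x in Ico a 1, g x := by
          rw [MeasureTheory.integral_const_mul]
      _ ≤ (1+ε) * Real.log v * ∫ x in Ioo (0:ℝ) 1, g x := by
          apply mul_le_mul_of_nonneg_left _ (by positivity)
          exact setIntegral_mono_set hgint hnn hsub.eventuallyLE
  linarith

lemma aux_lowerb (c β ε : ℝ) (hc : -1 < c) (hβ : 1 ≤ β) (hε : 0 < ε) (hε1 : ε < 1) :
    ∃ K, 0 ≤ K ∧ ∀ᶠ v : ℝ in atTop,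
      (1-ε) * Real.log v *
          ((∫ x in Ioo (0:ℝ) 1, x ^ c * Real.log (1/x) ^ (β-1) * Real.exp (-v*x/2))
            - K * Real.exp (-(v ^ ε)/2))
        ≤ ∫ x in Ioo (0:ℝ) 1, x ^ c * Real.log (1/x) ^ β * Real.exp (-v*x/2) := by
  set h0 := fun x : ℝ => x ^ c * Real.log (1/x) ^ (β-1) * Real.exp (-(0:ℝ)*x/2) with hh0
  have hh0int : IntegrableOn h0 (Ioo (0:ℝ) 1) :=
    aux_integrable c (β-1) 0 hc (by linarith) le_rfl
  refine ⟨∫ x in Ioo (0:ℝ) 1, h0 x,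
    setIntegral_nonneg measurableSet_Ioo (fun x hx => aux_nonneg c (β-1) 0 x hx), ?_⟩
  filter_upwards [eventually_gt_atTop (1:ℝ)] with v hv1
  have hv0 : (0:ℝ) < v := by linarith
  have hlogv : 0 ≤ Real.log v := Real.log_nonneg hv1.le
  set a := v ^ (-(1-ε)) with hadef
  have ha0 : 0 < a := Real.rpow_pos_of_pos hv0 _
  have ha1 : a < 1 := Real.rpow_lt_one_of_one_lt_of_neg hv1 (by linarith)
  set f := fun x : ℝ => x ^ c * Real.log (1/x) ^ β * Real.exp (-v*x/2) with hfdef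
  set g := fun x : ℝ => x ^ c * Real.log (1/x) ^ (β-1) * Real.exp (-v*x/2) with hgdef
  have hfint : IntegrableOn f (Ioo (0:ℝ) 1) := aux_integrable c β v hc (by linarith) hv0.le
  have hgint : IntegrableOn g (Ioo (0:ℝ) 1) :=
    aux_integrable c (β-1) v hc (by linarith) hv0.le
  have hva : v * a = v ^ ε := by
    have : v ^ (1:ℝ) * v ^ (-(1-ε)) = v ^ ε := by
      rw [← Real.rpow_add hv0]; ring_nf
    rwa [Real.rpow_one] at this
  -- tail bound
  have htail : (∫ x in Ico a 1, g x) ≤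
      Real.exp (-(v ^ ε)/2) * ∫ x in Ioo (0:ℝ) 1, h0 x := by
    have hsub : Ico a 1 ⊆ Ioo (0:ℝ) 1 := fun x hx => ⟨lt_of_lt_of_le ha0 hx.1, hx.2⟩
    have hstep : (∫ x in Ico a 1, g x) ≤
        ∫ x in Ico a 1, Real.exp (-(v ^ ε)/2) * h0 x := by
      apply setIntegral_mono_on (hgint.mono_set hsub)
        ((hh0int.mono_set hsub).const_mul _) measurableSet_Ico
      intro x hx
      have hx' : x ∈ Ioo (0:ℝ) 1 := hsub hx
      have hexp : Real.exp (-v*x/2) ≤ Real.exp (-(v ^ ε)/2) := by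
        apply Real.exp_le_exp.mpr
        rw [← hva]
        have := mul_le_mul_of_nonneg_left hx.1 hv0.le
        linarith
      have hpos : 0 ≤ x ^ c * Real.log (1/x) ^ (β-1) := by
        have := aux_nonneg c (β-1) 0 x hx'
        have h1 : Real.exp (-(0:ℝ)*x/2) = 1 := by norm_num
        nlinarith [Real.exp_pos (-(0:ℝ)*x/2), this]
      have hg : g x = (x ^ c * Real.log (1/x) ^ (β-1)) * Real.exp (-v*x/2) := by
        rw [hgdef]
      have hh : h0 x = x ^ c * Real.log (1/x) ^ (β-1) := by
        rw [hh0]; simp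
      rw [hg, hh]
      calc (x ^ c * Real.log (1/x) ^ (β-1)) * Real.exp (-v*x/2)
          ≤ (x ^ c * Real.log (1/x) ^ (β-1)) * Real.exp (-(v ^ ε)/2) :=
            mul_le_mul_of_nonneg_left hexp hpos
        _ = Real.exp (-(v ^ ε)/2) * (x ^ c * Real.log (1/x) ^ (β-1)) := mul_comm _ _
    have hnn : 0 ≤ᶠ[ae (volume.restrict (Ioo (0:ℝ) 1))] h0 := by
      rw [EventuallyLE, ae_restrict_iff' measurableSet_Ioo]
      filter_upwards with x hx
      exact aux_nonneg c (β-1) 0 x hx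
    calc (∫ x in Ico a 1, g x) ≤ ∫ x in Ico a 1, Real.exp (-(v ^ ε)/2) * h0 x := hstep
      _ = Real.exp (-(v ^ ε)/2) * ∫ x in Ico a 1, h0 x := MeasureTheory.integral_const_mul _ _
      _ ≤ Real.exp (-(v ^ ε)/2) * ∫ x in Ioo (0:ℝ) 1, h0 x := by
          apply mul_le_mul_of_nonneg_left _ (Real.exp_pos _).le
          exact setIntegral_mono_set hh0int hnn hsub.eventuallyLE
  -- main lower bound on Ioo 0 a
  have hmain : (1-ε) * Real.log v * ∫ x in Ioo (0:ℝ) a, g x ≤ ∫ x in Ioo (0:ℝ) a, f x := by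
    have hsub : Ioo (0:ℝ) a ⊆ Ioo (0:ℝ) 1 := Ioo_subset_Ioo le_rfl ha1.le
    have hstep : (∫ x in Ioo (0:ℝ) a, (1-ε) * Real.log v * g x) ≤ ∫ x in Ioo (0:ℝ) a, f x := by
      apply setIntegral_mono_on ((hgint.mono_set hsub).const_mul _)
        (hfint.mono_set hsub) measurableSet_Ioo
      intro x hx
      have hx' : x ∈ Ioo (0:ℝ) 1 := hsub hx
      have hL : 0 < Real.log (1/x) :=
        Real.log_pos (by rw [one_div]; exact one_lt_inv_iff₀.mpr ⟨hx'.1, hx'.2⟩)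
      have hLge : (1-ε) * Real.log v ≤ Real.log (1/x) := by
        have h1 : (1:ℝ)/a ≤ 1/x := one_div_le_one_div_of_le hx'.1 hx.2.le
        have h2 : Real.log (1/a) ≤ Real.log (1/x) :=
          Real.log_le_log (one_div_pos.mpr ha0) h1
        have h3 : Real.log (1/a) = (1-ε) * Real.log v := by
          rw [one_div, Real.log_inv, hadef, Real.log_rpow hv0]
          ring
        linarith
      have hfg : f x = g x * Real.log (1/x) := by
        rw [hfdef, hgdef]
        simp only
        rw [show β = (β-1)+1 by ring, Real.rpow_add_one hL.ne']
        ring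
      have hg0 : 0 ≤ g x := aux_nonneg c (β-1) v x hx'
      calc (1-ε) * Real.log v * g x = g x * ((1-ε) * Real.log v) := mul_comm _ _
        _ ≤ g x * Real.log (1/x) := mul_le_mul_of_nonneg_left hLge hg0
        _ = f x := hfg.symm
    calc (1-ε) * Real.log v * ∫ x in Ioo (0:ℝ) a, g x
        = ∫ x in Ioo (0:ℝ) a, (1-ε) * Real.log v * g x :=
          (MeasureTheory.integral_const_mul _ _).symm
      _ ≤ ∫ x in Ioo (0:ℝ) a, f x := hstep
  -- B ≥ ∫_{Ioo 0 a} f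
  have hBf : (∫ x in Ioo (0:ℝ) a, f x) ≤ ∫ x in Ioo (0:ℝ) 1, f x := by
    have hnn : 0 ≤ᶠ[ae (volume.restrict (Ioo (0:ℝ) 1))] f := by
      rw [EventuallyLE, ae_restrict_iff' measurableSet_Ioo]
      filter_upwards with x hx
      exact aux_nonneg c β v x hx
    exact setIntegral_mono_set hfint hnn (Ioo_subset_Ioo le_rfl ha1.le).eventuallyLE
  have hsplit := aux_split g a ha0 ha1 hgint
  have h9 : (1-ε) * Real.log v *
      ((∫ x in Ioo (0:ℝ) 1, g x) - (∫ x in Ioo (0:ℝ) 1, h0 x) * Real.exp (-(v ^ ε)/2))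
      ≤ (1-ε) * Real.log v * ∫ x in Ioo (0:ℝ) a, g x := by
    apply mul_le_mul_of_nonneg_left _ (by nlinarith)
    rw [hsplit]
    have := htail
    nlinarith
  calc (1-ε) * Real.log v *
      ((∫ x in Ioo (0:ℝ) 1, g x) - (∫ x in Ioo (0:ℝ) 1, h0 x) * Real.exp (-(v ^ ε)/2))
      ≤ (1-ε) * Real.log v * ∫ x in Ioo (0:ℝ) a, g x := h9
    _ ≤ ∫ x in Ioo (0:ℝ) a, f x := hmain
    _ ≤ ∫ x in Ioo (0:ℝ) 1, f x := hBf

/-- For p ≥ 3 and b ≥ 1,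
lim_{v→∞} (log v) · [∫₀¹ λ^{p/2−2}(log(1/λ))^{b−1} e^{−vλ/2} dλ] /
  [∫₀¹ λ^{p/2−2}(log(1/λ))^{b} e^{−vλ/2} dλ] = 1. -/
theorem stmt3 (p : ℝ) (hp : 3 ≤ p) (b : ℝ) (hb : 1 ≤ b) :
    Tendsto (fun v : ℝ => Real.log v *
      ((∫ l in Set.Ioo (0 : ℝ) 1,
          l ^ (p / 2 - 2) * Real.log (1 / l) ^ (b - 1) * Real.exp (-v * l / 2)) /
        (∫ l in Set.Ioo (0 : ℝ) 1,
          l ^ (p / 2 - 2) * Real.log (1 / l) ^ b * Real.exp (-v * l / 2))))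
      atTop (nhds 1) := by
  set c := p / 2 - 2 with hcdef
  have hc : -1 < c := by rw [hcdef]; linarith
  rw [Metric.tendsto_nhds]
  intro ε₀ hε₀
  set ε := min (ε₀/16) (1/4) with hεdef
  have hε : 0 < ε := lt_min (by linarith) (by norm_num)
  have hε4 : ε ≤ 1/4 := min_le_right _ _
  have hε16 : ε ≤ ε₀/16 := min_le_left _ _
  have hε1 : ε < 1 := by linarith
  obtain ⟨CL, hCL, hlow⟩ := aux_lower c (b-1) hc (by linarith)
  obtain ⟨CU, hCU, η, hη, hup⟩ := aux_upper c b ε hc hb hε hε1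
  obtain ⟨K, hK, hlob⟩ := aux_lowerb c b ε hc hb hε hε1
  -- eventual bound for the E1 error
  have hE1ev : ∀ᶠ v : ℝ in atTop, CU * v ^ (-η) ≤ ε * CL * v ^ (-(c+1)) := by
    have ht : Tendsto (fun v : ℝ => v ^ (η - (c+1))) atTop atTop :=
      tendsto_rpow_atTop (by linarith)
    filter_upwards [ht.eventually_ge_atTop (CU / (ε * CL)), eventually_gt_atTop (0:ℝ)]
      with v hv hv0
    have hpow : v ^ (-η) * v ^ (η - (c+1)) = v ^ (-(c+1)) := by
      rw [← Real.rpow_add hv0]; ring_nf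
    have h1 : CU ≤ ε * CL * v ^ (η - (c+1)) := by
      rw [div_le_iff₀ (by positivity)] at hv
      linarith [hv]
    calc CU * v ^ (-η) ≤ (ε * CL * v ^ (η - (c+1))) * v ^ (-η) :=
          mul_le_mul_of_nonneg_right h1 (Real.rpow_pos_of_pos hv0 _).le
      _ = ε * CL * v ^ (-(c+1)) := by rw [mul_assoc, mul_comm (v ^ (η - (c+1))), hpow]
  -- eventual bound for the E2 error
  have hE2ev : ∀ᶠ v : ℝ in atTop, K * Real.exp (-(v ^ ε)/2) ≤ ε * CL * v ^ (-(c+1)) := by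
    have hT1 : Tendsto (fun u : ℝ => u ^ ((c+1)/ε) * Real.exp (-(1/2) * u)) atTop (nhds 0) :=
      tendsto_rpow_mul_exp_neg_mul_atTop_nhds_zero _ (1/2) (by norm_num)
    have hT2 : Tendsto (fun v : ℝ => v ^ ε) atTop atTop := tendsto_rpow_atTop hε
    have hT3 : Tendsto (fun v : ℝ => (v ^ ε) ^ ((c+1)/ε) * Real.exp (-(1/2) * v ^ ε))
        atTop (nhds 0) := hT1.comp hT2
    have hT4 : Tendsto (fun v : ℝ => v ^ (c+1) * Real.exp (-(v ^ ε)/2)) atTop (nhds 0) := by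
      apply hT3.congr'
      filter_upwards [eventually_gt_atTop (0:ℝ)] with v hv0
      rw [← Real.rpow_mul hv0.le]
      rw [show ε * ((c+1)/ε) = c + 1 by field_simp]
      rw [show -(1/2) * v ^ ε = -(v ^ ε)/2 by ring]
    have hsmall : ∀ᶠ v : ℝ in atTop,
        v ^ (c+1) * Real.exp (-(v ^ ε)/2) ≤ ε * CL / (K + 1) := by
      have hpos : (0:ℝ) < ε * CL / (K + 1) := by positivity
      filter_upwards [hT4.eventually (eventually_le_nhds hpos)] with v hv
      exact hv
    filter_upwards [hsmall, eventually_gt_atTop (0:ℝ)] with v hv hv0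
    have hvp : (0:ℝ) < v ^ (c+1) := Real.rpow_pos_of_pos hv0 _
    have h1 : Real.exp (-(v ^ ε)/2) ≤ ε * CL / (K + 1) * (v ^ (c+1))⁻¹ := by
      have h2 : Real.exp (-(v ^ ε)/2) * v ^ (c+1) ≤ ε * CL / (K + 1) := by
        rw [mul_comm]; exact hv
      rw [← le_div_iff₀ hvp] at h2
      rwa [div_eq_mul_inv] at h2
    calc K * Real.exp (-(v ^ ε)/2) ≤ (K+1) * Real.exp (-(v ^ ε)/2) :=
          mul_le_mul_of_nonneg_right (by linarith) (Real.exp_pos _).le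
      _ ≤ (K+1) * (ε * CL / (K + 1) * (v ^ (c+1))⁻¹) :=
          mul_le_mul_of_nonneg_left h1 (by linarith)
      _ = ε * CL * (v ^ (c+1))⁻¹ := by
          field_simp
      _ = ε * CL * v ^ (-(c+1)) := by rw [Real.rpow_neg hv0.le]
  -- combine everything
  filter_upwards [hup, hlob, hE1ev, hE2ev, eventually_ge_atTop (Real.exp 2),
    eventually_ge_atTop (Real.exp 1)] with v hupv hlobv hE1v hE2v hv2 hv1
  set A := ∫ x in Ioo (0:ℝ) 1, x ^ c * Real.log (1/x) ^ (b-1) * Real.exp (-v*x/2) with hA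
  set B := ∫ x in Ioo (0:ℝ) 1, x ^ c * Real.log (1/x) ^ b * Real.exp (-v*x/2) with hB
  have hv0 : (0:ℝ) < v := lt_of_lt_of_le (Real.exp_pos 2) hv2
  have hAlow : CL * v ^ (-(c+1)) ≤ A := hlow v hv2
  have hL1 : 1 ≤ Real.log v := by
    rw [← Real.log_exp 1]
    exact Real.log_le_log (Real.exp_pos 1) hv1
  have hA0 : 0 < A := lt_of_lt_of_le (by positivity) hAlow
  have hLA : 0 < Real.log v * A := by nlinarith
  have h2 : ε * A ≤ ε * (Real.log v * A) := by
    nlinarith [mul_nonneg (mul_nonneg hε.le hA0.le) (sub_nonneg.mpr hL1)]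
  have h1 : ε * (CL * v ^ (-(c+1))) ≤ ε * A := mul_le_mul_of_nonneg_left hAlow hε.le
  have hE1 : CU * v ^ (-η) ≤ ε * (Real.log v * A) := by
    nlinarith [hE1v]
  have hE2 : K * Real.exp (-(v ^ ε)/2) ≤ ε * A := by
    nlinarith [hE2v]
  clear hup hlob hE1ev hE2ev hE1v hE2v hlow h1 h2 hAlow
  have hUp : B ≤ (1 + 2*ε) * (Real.log v * A) := by nlinarith [hupv, hE1]
  have hLo : (1-ε) * (1-ε) * (Real.log v * A) ≤ B := by
    have h7 : (1-ε) * A ≤ A - K * Real.exp (-(v ^ ε)/2) := by linarith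
    have h8 := mul_le_mul_of_nonneg_left h7
      (show 0 ≤ (1-ε) * Real.log v by nlinarith)
    nlinarith [h8, hlobv]
  have hB0 : 0 < B := lt_of_lt_of_le (by nlinarith) hLo
  rw [Real.dist_eq]
  have hkey : Real.log v * (A / B) - 1 = (Real.log v * A - B) / B := by
    field_simp
  rw [hkey, abs_div, abs_of_pos hB0]
  have hnum : |Real.log v * A - B| ≤ 2*ε*(Real.log v * A) := by
    rw [abs_le]
    constructor
    · nlinarith [hUp]
    · nlinarith [hLo]
  have hden : (9/16) * (Real.log v * A) ≤ B := by
    nlinarith [hLo, mul_nonneg (mul_nonneg (show (0:ℝ) ≤ 1/4 - ε by linarith)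
      (show (0:ℝ) ≤ 7/4 - ε by linarith)) hLA.le]
  calc |Real.log v * A - B| / B ≤ (2*ε*(Real.log v * A)) / ((9/16)*(Real.log v * A)) :=
        div_le_div₀ (by positivity) hnum (by nlinarith) hden
    _ = 32/9 * ε := by
        field_simp
        ring
    _ < ε₀ := by linarith
end

section
/- Define ψ(v) = v · [∫₀¹ λ^{p/2−1}(log(1/λ))^b e^{−vλ/2} dλ] / [∫₀¹ λ^{p/2−2}(log(1/λ))^b e^{−vλ/2} dλ] for v > 0, with p ≥ 3 and b ≥ 1. Then lim_{v→∞} (log v)(p − 2 − ψ(v)) = 2b. -/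
open MeasureTheory Filter Set

namespace Stmt4Aux

lemma neg_log_le {ε l : ℝ} (hε : 0 < ε) (hl : 0 < l) : -Real.log l ≤ ε⁻¹ * l ^ (-ε) := by
  have h := Real.log_le_rpow_div (x := l⁻¹) (inv_nonneg.2 hl.le) hε
  rw [Real.log_inv] at h
  calc -Real.log l ≤ (l⁻¹) ^ ε / ε := h
    _ = ε⁻¹ * l ^ (-ε) := by
        rw [Real.inv_rpow hl.le, ← Real.rpow_neg hl.le]; ring

lemma f_le {s c v ε : ℝ} (hc : 0 ≤ c) (hε : 0 < ε) {l : ℝ} (hl0 : 0 < l) (hl1 : l ≤ 1) :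
    l ^ s * (-Real.log l) ^ c * Real.exp (-v * l / 2)
      ≤ ε⁻¹ ^ c * Real.exp (|v| / 2) * l ^ (s - ε * c) := by
  have hlog : 0 ≤ -Real.log l := neg_nonneg.2 (Real.log_nonpos hl0.le hl1)
  have h1 : (-Real.log l) ^ c ≤ ε⁻¹ ^ c * l ^ (-(ε * c)) := by
    calc (-Real.log l) ^ c ≤ (ε⁻¹ * l ^ (-ε)) ^ c :=
          Real.rpow_le_rpow hlog (neg_log_le hε hl0) hc
      _ = ε⁻¹ ^ c * (l ^ (-ε)) ^ c :=
          Real.mul_rpow (by positivity) (Real.rpow_nonneg hl0.le _)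
      _ = ε⁻¹ ^ c * l ^ (-(ε * c)) := by
          rw [← Real.rpow_mul hl0.le]; ring_nf
  have h2 : Real.exp (-v * l / 2) ≤ Real.exp (|v| / 2) := by
    apply Real.exp_le_exp.2
    have h3 : -v * l ≤ |v| * l := mul_le_mul_of_nonneg_right (neg_le_abs v) hl0.le
    have h4 : |v| * l ≤ |v| * 1 := mul_le_mul_of_nonneg_left hl1 (abs_nonneg v)
    nlinarith
  calc l ^ s * (-Real.log l) ^ c * Real.exp (-v * l / 2)
      ≤ l ^ s * (ε⁻¹ ^ c * l ^ (-(ε * c))) * Real.exp (|v| / 2) := by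
        apply mul_le_mul (mul_le_mul_of_nonneg_left h1 (Real.rpow_nonneg hl0.le s)) h2
          (Real.exp_nonneg _) (by positivity)
    _ = ε⁻¹ ^ c * Real.exp (|v| / 2) * l ^ (s - ε * c) := by
        rw [show s - ε * c = s + -(ε * c) by ring, Real.rpow_add hl0]; ring

lemma eps_pos {s c : ℝ} (hs : -1 < s) (hc : 0 ≤ c) : 0 < (s + 1) / (2 * (c + 1)) :=
  div_pos (by linarith) (by positivity)

lemma eps_spec {s c : ℝ} (hs : -1 < s) (hc : 0 ≤ c) :
    -1 < s - (s + 1) / (2 * (c + 1)) * c := by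
  have h1 : (s + 1) / (2 * (c + 1)) * c ≤ (s + 1) / 2 := by
    rw [div_mul_eq_mul_div, div_le_div_iff₀ (by positivity) (by norm_num)]
    nlinarith
  linarith

lemma contAt {s c v : ℝ} {x : ℝ} (hx0 : 0 < x) (hx : -Real.log x ≠ 0 ∨ 0 ≤ c) :
    ContinuousAt (fun l => l ^ s * (-Real.log l) ^ c * Real.exp (-v * l / 2)) x := by
  apply ContinuousAt.mul (ContinuousAt.mul ?_ ?_) ?_
  · exact Real.continuousAt_rpow_const x s (Or.inl hx0.ne')
  · exact ContinuousAt.comp (g := fun y : ℝ => y ^ c) (f := fun l : ℝ => -Real.log l)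
      (Real.continuousAt_rpow_const _ c hx) ((Real.continuousAt_log hx0.ne').neg)
  · exact (Real.continuous_exp.comp ((continuous_const.mul continuous_id).div_const 2)).continuousAt

lemma contOn {s c v : ℝ} :
    ContinuousOn (fun l => l ^ s * (-Real.log l) ^ c * Real.exp (-v * l / 2))
      (Set.Ioo (0:ℝ) 1) := fun x hx =>
  (contAt hx.1 (Or.inl (by have := Real.log_neg hx.1 hx.2; intro h; rw [← h] at this; linarith))).continuousWithinAt

lemma integrable_aux {s c : ℝ} (v : ℝ) (hs : -1 < s) (hc : 0 ≤ c) :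
    IntegrableOn (fun l => l ^ s * (-Real.log l) ^ c * Real.exp (-v * l / 2))
      (Set.Ioo (0:ℝ) 1) := by
  set ε : ℝ := (s + 1) / (2 * (c + 1)) with hεdef
  have hε : 0 < ε := eps_pos hs hc
  have hexp : -1 < s - ε * c := eps_spec hs hc
  have hg : IntegrableOn (fun l : ℝ => l ^ (s - ε * c)) (Set.Ioo (0:ℝ) 1) := by
    have h := intervalIntegral.intervalIntegrable_rpow' (a := 0) (b := 1) hexp
    rwa [intervalIntegrable_iff_integrableOn_Ioo_of_le (by norm_num)] at h
  apply Integrable.mono' (hg.const_mul (ε⁻¹ ^ c * Real.exp (|v| / 2)))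
  · exact contOn.aestronglyMeasurable measurableSet_Ioo
  · filter_upwards [ae_restrict_mem measurableSet_Ioo] with l hl
    have hlog : 0 ≤ -Real.log l := neg_nonneg.2 (Real.log_nonpos hl.1.le hl.2.le)
    rw [Real.norm_eq_abs, abs_of_nonneg (mul_nonneg (mul_nonneg (Real.rpow_nonneg hl.1.le _)
      (Real.rpow_nonneg hlog _)) (Real.exp_nonneg _))]
    exact f_le hc hε hl.1 hl.2.le

lemma integral_pos_aux {s c : ℝ} (v : ℝ) (hs : -1 < s) (hc : 0 ≤ c) :
    0 < ∫ l in Set.Ioo (0:ℝ) 1, l ^ s * (-Real.log l) ^ c * Real.exp (-v * l / 2) := by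
  have h1 : 0 ≤ᵐ[volume.restrict (Set.Ioo (0:ℝ) 1)]
      fun l => l ^ s * (-Real.log l) ^ c * Real.exp (-v * l / 2) := by
    filter_upwards [ae_restrict_mem measurableSet_Ioo] with l hl
    have hlog : 0 ≤ -Real.log l := neg_nonneg.2 (Real.log_nonpos hl.1.le hl.2.le)
    exact mul_nonneg (mul_nonneg (Real.rpow_nonneg hl.1.le _)
      (Real.rpow_nonneg hlog _)) (Real.exp_nonneg _)
  refine (setIntegral_pos_iff_support_of_nonneg_ae h1 (integrable_aux v hs hc)).2 ?_
  have hsub : Set.Ioo (0:ℝ) 1 ⊆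
      (Function.support fun l => l ^ s * (-Real.log l) ^ c * Real.exp (-v * l / 2))
        ∩ Set.Ioo (0:ℝ) 1 := by
    intro l hl
    refine ⟨?_, hl⟩
    have hlog : 0 < -Real.log l := by
      have := Real.log_neg hl.1 hl.2; linarith
    have : 0 < l ^ s * (-Real.log l) ^ c * Real.exp (-v * l / 2) := by
      have h1 := Real.rpow_pos_of_pos hl.1 s
      have h2 := Real.rpow_pos_of_pos hlog c
      exact mul_pos (mul_pos h1 h2) (Real.exp_pos _)
    exact this.ne'
  calc (0:ENNReal) < volume (Set.Ioo (0:ℝ) 1) := by simp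
    _ ≤ _ := measure_mono hsub

lemma ibp_aux {s c : ℝ} (v : ℝ) (hs : 0 < s) (hc : 1 ≤ c) :
    v / 2 * ∫ l in Set.Ioo (0:ℝ) 1, l ^ s * (-Real.log l) ^ c * Real.exp (-v * l / 2)
      = s * (∫ l in Set.Ioo (0:ℝ) 1, l ^ (s-1) * (-Real.log l) ^ c * Real.exp (-v * l / 2))
        - c * ∫ l in Set.Ioo (0:ℝ) 1, l ^ (s-1) * (-Real.log l) ^ (c-1) * Real.exp (-v * l / 2) := by
  have hc0 : (0:ℝ) < c := by linarith
  set F : ℝ → ℝ := fun l => l ^ s * (-Real.log l) ^ c * Real.exp (-v * l / 2) with hF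
  set F' : ℝ → ℝ := fun l =>
      s * (l ^ (s-1) * (-Real.log l) ^ c * Real.exp (-v * l / 2))
      - c * (l ^ (s-1) * (-Real.log l) ^ (c-1) * Real.exp (-v * l / 2))
      - v / 2 * (l ^ s * (-Real.log l) ^ c * Real.exp (-v * l / 2)) with hF'
  have hA := integrable_aux (s := s-1) (c := c) v (by linarith) (by linarith)
  have hB := integrable_aux (s := s-1) (c := c-1) v (by linarith) (by linarith)
  have hC := integrable_aux (s := s) (c := c) v (by linarith) (by linarith)
  have hF'int : IntegrableOn F' (Set.Ioo (0:ℝ) 1) :=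
    ((hA.const_mul s).sub (hB.const_mul c)).sub (hC.const_mul (v/2))
  -- continuity of F on Icc 0 1
  have hcont : ContinuousOn F (Set.Icc (0:ℝ) 1) := by
    intro x hx
    rcases eq_or_lt_of_le hx.1 with h0 | h0
    · -- x = 0
      rw [← h0]
      have hF0 : F 0 = 0 := by
        simp [hF, Real.zero_rpow hs.ne']
      have hε : (0:ℝ) < s / (2 * c) := by positivity
      set ε : ℝ := s / (2 * c) with hεdef
      have hεc : ε * c = s / 2 := by
        rw [hεdef, div_mul_eq_mul_div, mul_comm (2:ℝ) c, ← div_div, mul_div_cancel_right₀ s hc0.ne']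
      have hpos : (0:ℝ) < s - ε * c := by rw [hεc]; linarith
      unfold ContinuousWithinAt
      rw [hF0]
      apply squeeze_zero' (g := fun l : ℝ => ε⁻¹ ^ c * Real.exp (|v| / 2) * l ^ (s - ε * c))
        ?_ ?_ ?_
      · filter_upwards [self_mem_nhdsWithin] with l hl
        have hlog : 0 ≤ -Real.log l := neg_nonneg.2 (Real.log_nonpos hl.1 hl.2)
        exact mul_nonneg (mul_nonneg (Real.rpow_nonneg hl.1 _)
          (Real.rpow_nonneg hlog _)) (Real.exp_nonneg _)
      · filter_upwards [self_mem_nhdsWithin] with l hl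
        rcases eq_or_lt_of_le hl.1 with h0' | h0'
        · rw [← h0', hF0, Real.zero_rpow hpos.ne', mul_zero]
        · exact f_le hc0.le hε h0' hl.2
      · have hco : ContinuousAt (fun l : ℝ => l ^ (s - ε * c)) 0 :=
          Real.continuousAt_rpow_const 0 _ (Or.inr hpos.le)
        have h1 : Tendsto (fun l : ℝ => ε⁻¹ ^ c * Real.exp (|v| / 2) * l ^ (s - ε * c))
            (nhdsWithin 0 (Set.Icc (0:ℝ) 1)) (nhds (ε⁻¹ ^ c * Real.exp (|v| / 2) * (0:ℝ) ^ (s - ε * c))) :=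
          (hco.continuousWithinAt.tendsto).const_mul _
        rw [Real.zero_rpow hpos.ne', mul_zero] at h1
        exact h1
    · -- 0 < x
      have hne : -Real.log x ≠ 0 ∨ 0 ≤ c := Or.inr hc0.le
      exact (contAt h0 hne).continuousWithinAt
  -- derivative
  have hderiv : ∀ x ∈ Set.Ioo (0:ℝ) 1, HasDerivWithinAt F (F' x) (Set.Ioi x) x := by
    intro x hx
    have hx0 : 0 < x := hx.1
    have hlog : 0 < -Real.log x := by have := Real.log_neg hx.1 hx.2; linarith
    have h1 : HasDerivAt (fun l : ℝ => l ^ s) (s * x ^ (s-1)) x :=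
      Real.hasDerivAt_rpow_const (Or.inl hx0.ne')
    have h2 : HasDerivAt (fun l : ℝ => (-Real.log l) ^ c)
        (-x⁻¹ * c * (-Real.log x) ^ (c-1)) x :=
      ((Real.hasDerivAt_log hx0.ne').neg).rpow_const (Or.inl hlog.ne')
    have h4 : HasDerivAt (fun l : ℝ => -v * l / 2) (-v / 2) x := by
      simpa using ((hasDerivAt_id x).const_mul (-v)).div_const 2
    have h3 : HasDerivAt (fun l : ℝ => Real.exp (-v * l / 2))
        (Real.exp (-v * x / 2) * (-v / 2)) x := h4.exp
    have h5 := (h1.mul h2).mul h3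
    have h6 : F' x = (s * x ^ (s-1) * (-Real.log x) ^ c
        + x ^ s * (-x⁻¹ * c * (-Real.log x) ^ (c-1))) * Real.exp (-v * x / 2)
        + x ^ s * (-Real.log x) ^ c * (Real.exp (-v * x / 2) * (-v / 2)) := by
      simp only [hF']
      rw [Real.rpow_sub_one hx0.ne']
      field_simp
      ring
    rw [h6]
    exact h5.hasDerivWithinAt
  have hint : IntervalIntegrable F' volume 0 1 := by
    rw [intervalIntegrable_iff_integrableOn_Ioo_of_le (by norm_num)]
    exact hF'int
  have key := intervalIntegral.integral_eq_sub_of_hasDeriv_right_of_le (by norm_num : (0:ℝ) ≤ 1)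
    hcont hderiv hint
  have hF1 : F 1 = 0 := by
    simp [hF, Real.zero_rpow hc0.ne']
  have hF0 : F 0 = 0 := by
    simp [hF, Real.zero_rpow hs.ne']
  rw [hF1, hF0, sub_zero, intervalIntegral.integral_of_le (by norm_num : (0:ℝ) ≤ 1),
    MeasureTheory.integral_Ioc_eq_integral_Ioo] at key
  have h12 : Integrable (fun l : ℝ => s * (l ^ (s-1) * (-Real.log l) ^ c * Real.exp (-v * l / 2))
      - c * (l ^ (s-1) * (-Real.log l) ^ (c-1) * Real.exp (-v * l / 2)))
      (volume.restrict (Set.Ioo (0:ℝ) 1)) := by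
    exact (hA.const_mul s).sub (hB.const_mul c)
  have hCc : Integrable (fun l : ℝ => v / 2 * (l ^ s * (-Real.log l) ^ c * Real.exp (-v * l / 2)))
      (volume.restrict (Set.Ioo (0:ℝ) 1)) := hC.const_mul (v/2)
  have hAc : Integrable (fun l : ℝ => s * (l ^ (s-1) * (-Real.log l) ^ c * Real.exp (-v * l / 2)))
      (volume.restrict (Set.Ioo (0:ℝ) 1)) := hA.const_mul s
  have hBc : Integrable (fun l : ℝ => c * (l ^ (s-1) * (-Real.log l) ^ (c-1) * Real.exp (-v * l / 2)))
      (volume.restrict (Set.Ioo (0:ℝ) 1)) := hB.const_mul c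
  simp only [hF'] at key
  rw [MeasureTheory.integral_sub h12 hCc, MeasureTheory.integral_sub hAc hBc,
    MeasureTheory.integral_const_mul, MeasureTheory.integral_const_mul,
    MeasureTheory.integral_const_mul] at key
  rw [hF]
  linarith

lemma subst_aux {s c v : ℝ} (hv : 0 < v) :
    ∫ l in Set.Ioo (0:ℝ) 1, l ^ s * (-Real.log l) ^ c * Real.exp (-v * l / 2)
      = (2/v) ^ (s+1) *
        ∫ t in Set.Ioo (0:ℝ) (v/2),
          t ^ s * (Real.log v - Real.log (2*t)) ^ c * Real.exp (-t) := by
  have hv2 : (0:ℝ) < v/2 := by linarith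
  have h2v : (0:ℝ) < 2/v := by positivity
  -- convert to interval integral
  rw [← MeasureTheory.integral_Ioc_eq_integral_Ioo,
    ← intervalIntegral.integral_of_le (by norm_num : (0:ℝ) ≤ 1)]
  have hsub := intervalIntegral.integral_comp_mul_left
    (f := fun l => l ^ s * (-Real.log l) ^ c * Real.exp (-v * l / 2))
    (a := (0:ℝ)) (b := v/2) (c := 2/v) h2v.ne'
  have he : (2:ℝ)/v * (v/2) = 1 := by field_simp
  rw [mul_zero, he] at hsub
  -- hsub : ∫ x in 0..v/2, f (2/v * x) = (2/v)⁻¹ • ∫ x in 0..1, f x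
  have h1 : (∫ x in (0:ℝ)..1, x ^ s * (-Real.log x) ^ c * Real.exp (-v * x / 2))
      = (2/v) * ∫ x in (0:ℝ)..(v/2), (2/v*x) ^ s * (-Real.log (2/v*x)) ^ c
          * Real.exp (-v * (2/v*x) / 2) := by
    rw [hsub, smul_eq_mul, ← mul_assoc, mul_inv_cancel₀ h2v.ne', one_mul]
  rw [h1, intervalIntegral.integral_of_le hv2.le, MeasureTheory.integral_Ioc_eq_integral_Ioo]
  have h2 : ∀ t ∈ Set.Ioo (0:ℝ) (v/2),
      (2/v*t) ^ s * (-Real.log (2/v*t)) ^ c * Real.exp (-v * (2/v*t) / 2)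
        = (2/v) ^ s * (t ^ s * (Real.log v - Real.log (2*t)) ^ c * Real.exp (-t)) := by
    intro t ht
    have ht0 : 0 < t := ht.1
    have hlogeq : -Real.log (2/v*t) = Real.log v - Real.log (2*t) := by
      rw [show (2:ℝ)/v*t = 2*t/v by ring, Real.log_div (by positivity) hv.ne']
      ring
    have hexpeq : -v * (2/v*t) / 2 = -t := by field_simp
    rw [Real.mul_rpow h2v.le ht0.le, hlogeq, hexpeq]
    ring
  rw [MeasureTheory.setIntegral_congr_fun measurableSet_Ioo h2,
    MeasureTheory.integral_const_mul, ← mul_assoc]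
  rw [mul_comm ((2:ℝ)/v) ((2/v) ^ s), ← Real.rpow_add_one h2v.ne']

lemma pull_log_aux {s c v : ℝ} (hc : 0 ≤ c) (hv : 1 < v) :
    ∫ t in Set.Ioo (0:ℝ) (v/2), t ^ s * (Real.log v - Real.log (2*t)) ^ c * Real.exp (-t)
      = (Real.log v) ^ c *
        ∫ t in Set.Ioo (0:ℝ) (v/2),
          t ^ s * ((Real.log v - Real.log (2*t)) / Real.log v) ^ c * Real.exp (-t) := by
  have hlog : 0 < Real.log v := Real.log_pos hv
  rw [← MeasureTheory.integral_const_mul]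
  apply MeasureTheory.setIntegral_congr_fun measurableSet_Ioo
  intro t ht
  have ht0 : 0 < t := ht.1
  have h2t : 0 < 2*t := by linarith
  have hle : Real.log (2*t) ≤ Real.log v := Real.log_le_log h2t (by linarith [ht.2])
  have hnum : 0 ≤ Real.log v - Real.log (2*t) := by linarith
  dsimp only
  rw [Real.div_rpow hnum hlog.le]
  have hne : (Real.log v) ^ c ≠ 0 := (Real.rpow_pos_of_pos hlog c).ne'
  field_simp

lemma bnd_integrable {s c : ℝ} (hs : -1 < s) (hc : 0 ≤ c) :
    IntegrableOn (fun t : ℝ => t ^ s * (1 + max 0 (-Real.log (2*t))) ^ c * Real.exp (-t))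
      (Set.Ioi (0:ℝ)) := by
  set ε : ℝ := (s + 1) / (2 * (c + 1)) with hεdef
  have hε : 0 < ε := eps_pos hs hc
  have hexp : -1 < s - ε * c := eps_spec hs hc
  set K : ℝ := ε⁻¹ * (Real.exp 1 / 2) ^ ε with hK
  have hKpos : 0 < K := by
    have := Real.rpow_pos_of_pos (by positivity : (0:ℝ) < Real.exp 1 / 2) ε
    positivity
  have hi : IntegrableOn (fun t : ℝ => t ^ s * (1 + max 0 (-Real.log (2*t))) ^ c * Real.exp (-t))
      (Set.Ioo (0:ℝ) (1/2)) := by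
    have hg : IntegrableOn (fun t : ℝ => t ^ (s - ε * c)) (Set.Ioo (0:ℝ) (1/2)) := by
      have h := intervalIntegral.intervalIntegrable_rpow' (a := 0) (b := 1/2) hexp
      rwa [intervalIntegrable_iff_integrableOn_Ioo_of_le (by norm_num)] at h
    apply Integrable.mono' (hg.const_mul (K ^ c))
    · apply ContinuousOn.aestronglyMeasurable ?_ measurableSet_Ioo
      intro t ht
      have ht0 : 0 < t := ht.1
      have hbase : (0:ℝ) < 1 + max 0 (-Real.log (2*t)) := by
        have := le_max_left (0:ℝ) (-Real.log (2*t)); linarith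
      apply ContinuousWithinAt.mul (ContinuousWithinAt.mul ?_ ?_) ?_
      · exact (Real.continuousAt_rpow_const t s (Or.inl ht0.ne')).continuousWithinAt
      · apply ContinuousAt.continuousWithinAt
        apply ContinuousAt.comp (g := fun y : ℝ => y ^ c)
          (f := fun t : ℝ => 1 + max 0 (-Real.log (2*t)))
          (Real.continuousAt_rpow_const _ c (Or.inl hbase.ne'))
        apply ContinuousAt.add continuousAt_const
        exact Filter.Tendsto.max continuousAt_const
          (((Real.continuousAt_log (mul_ne_zero two_ne_zero ht0.ne')).comp
            ((continuous_const.mul continuous_id).continuousAt)).neg)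
      · exact (Real.continuous_exp.comp continuous_neg).continuousWithinAt
    · filter_upwards [ae_restrict_mem measurableSet_Ioo] with t ht
      have ht0 : 0 < t := ht.1
      have h2t : 0 < 2*t := by linarith
      have h2t1 : 2*t ≤ 1 := by linarith [ht.2]
      have hbase0 : (0:ℝ) ≤ 1 + max 0 (-Real.log (2*t)) := by
        have := le_max_left (0:ℝ) (-Real.log (2*t)); linarith
      have hmax : max 0 (-Real.log (2*t)) = -Real.log (2*t) :=
        max_eq_right (neg_nonneg.2 (Real.log_nonpos h2t.le h2t1))
      have hkey : 1 + max 0 (-Real.log (2*t)) ≤ K * t ^ (-ε) := by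
        rw [hmax]
        have h1 : 1 - Real.log (2*t) = Real.log (Real.exp 1 / (2*t)) := by
          rw [Real.log_div (Real.exp_ne_zero 1) h2t.ne', Real.log_exp]
        have h2 : Real.log (Real.exp 1 / (2*t)) ≤ (Real.exp 1 / (2*t)) ^ ε / ε :=
          Real.log_le_rpow_div (by positivity) hε
        have h3 : (Real.exp 1 / (2*t)) ^ ε = (Real.exp 1 / 2) ^ ε * t ^ (-ε) := by
          rw [show Real.exp 1 / (2*t) = (Real.exp 1 / 2) * t⁻¹ by field_simp,
            Real.mul_rpow (by positivity) (by positivity), Real.inv_rpow ht0.le,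
            ← Real.rpow_neg ht0.le]
        have h4 : (Real.exp 1 / (2*t)) ^ ε / ε = K * t ^ (-ε) := by
          rw [h3, hK]; ring
        linarith
      have htpow : (0:ℝ) ≤ t ^ s := Real.rpow_nonneg ht0.le s
      rw [Real.norm_eq_abs, abs_of_nonneg (mul_nonneg (mul_nonneg htpow
        (Real.rpow_nonneg hbase0 _)) (Real.exp_nonneg _))]
      have hexp1 : Real.exp (-t) ≤ 1 := by
        rw [show (1:ℝ) = Real.exp 0 from (Real.exp_zero).symm]
        exact Real.exp_le_exp.2 (by linarith)
      calc t ^ s * (1 + max 0 (-Real.log (2*t))) ^ c * Real.exp (-t)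
          ≤ t ^ s * (K * t ^ (-ε)) ^ c * 1 := by
            apply mul_le_mul (mul_le_mul_of_nonneg_left
              (Real.rpow_le_rpow hbase0 hkey hc) htpow) hexp1 (Real.exp_nonneg _)
              (mul_nonneg htpow (Real.rpow_nonneg (by positivity) _))
        _ = K ^ c * t ^ (s - ε * c) := by
            rw [mul_one, Real.mul_rpow hKpos.le (Real.rpow_nonneg ht0.le _),
              ← Real.rpow_mul ht0.le, show -ε * c = -(ε * c) by ring,
              show s - ε * c = s + -(ε * c) by ring, Real.rpow_add ht0]
            ring
  have hii : IntegrableOn (fun t : ℝ => t ^ s * (1 + max 0 (-Real.log (2*t))) ^ c * Real.exp (-t))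
      (Set.Ici (1/2:ℝ)) := by
    have hgi : IntegrableOn (fun t : ℝ => Real.exp (-t) * t ^ (s + 1 - 1)) (Set.Ioi (0:ℝ)) :=
      Real.GammaIntegral_convergent (by linarith)
    have hgi2 : IntegrableOn (fun t : ℝ => Real.exp (-t) * t ^ (s + 1 - 1)) (Set.Ici (1/2:ℝ)) :=
      hgi.mono_set (fun t ht => by simp only [Set.mem_Ici] at ht; exact Set.mem_Ioi.2 (by linarith))
    apply hgi2.congr_fun ?_ measurableSet_Ici
    intro t ht
    simp only [Set.mem_Ici] at ht
    have h2t : (1:ℝ) ≤ 2*t := by linarith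
    have hmax : max 0 (-Real.log (2*t)) = 0 :=
      max_eq_left (neg_nonpos.2 (Real.log_nonneg h2t))
    dsimp only
    rw [hmax, add_zero, Real.one_rpow, show s + 1 - 1 = s by ring]
    ring
  apply IntegrableOn.mono_set (hi.union hii)
  intro t ht
  rcases lt_or_ge t (1/2) with h | h
  · exact Or.inl ⟨ht, h⟩
  · exact Or.inr h

lemma dct_aux {s c : ℝ} (hs : -1 < s) (hc : 0 ≤ c) :
    Tendsto (fun v : ℝ => ∫ t in Set.Ioo (0:ℝ) (v/2),
        t ^ s * ((Real.log v - Real.log (2*t)) / Real.log v) ^ c * Real.exp (-t))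
      atTop (nhds (Real.Gamma (s+1))) := by
  have hrw : ∀ v : ℝ, (∫ t in Set.Ioo (0:ℝ) (v/2),
      t ^ s * ((Real.log v - Real.log (2*t)) / Real.log v) ^ c * Real.exp (-t))
      = ∫ t in Set.Ioi (0:ℝ), (Set.Ioo (0:ℝ) (v/2)).indicator
          (fun t => t ^ s * ((Real.log v - Real.log (2*t)) / Real.log v) ^ c * Real.exp (-t)) t := by
    intro v
    rw [MeasureTheory.integral_indicator measurableSet_Ioo,
      Measure.restrict_restrict measurableSet_Ioo,
      Set.inter_eq_self_of_subset_left (fun t ht => ht.1)]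
  have htarget : (∫ t in Set.Ioi (0:ℝ), t ^ s * Real.exp (-t)) = Real.Gamma (s+1) := by
    rw [Real.Gamma_eq_integral (by linarith : (0:ℝ) < s + 1)]
    apply MeasureTheory.setIntegral_congr_fun measurableSet_Ioi
    intro t ht
    rw [show s + 1 - 1 = s by ring]
    ring
  simp only [hrw]
  rw [← htarget]
  apply MeasureTheory.tendsto_integral_filter_of_dominated_convergence
    (bound := fun t : ℝ => t ^ s * (1 + max 0 (-Real.log (2*t))) ^ c * Real.exp (-t))
  · -- measurability
    filter_upwards [eventually_ge_atTop (3:ℝ)] with v hv3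
    have hlog : 0 < Real.log v := Real.log_pos (by linarith)
    rw [aestronglyMeasurable_indicator_iff measurableSet_Ioo,
      Measure.restrict_restrict measurableSet_Ioo,
      Set.inter_eq_self_of_subset_left Set.Ioo_subset_Ioi_self]
    apply ContinuousOn.aestronglyMeasurable ?_ measurableSet_Ioo
    intro t ht
    have ht0 : 0 < t := ht.1
    have h2t : 0 < 2*t := by linarith
    have hlt : Real.log (2*t) < Real.log v := Real.log_lt_log h2t (by linarith [ht.2])
    have hbase : 0 < (Real.log v - Real.log (2*t)) / Real.log v :=
      div_pos (by linarith) hlog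
    apply ContinuousWithinAt.mul (ContinuousWithinAt.mul ?_ ?_) ?_
    · exact (Real.continuousAt_rpow_const t s (Or.inl ht0.ne')).continuousWithinAt
    · apply ContinuousAt.continuousWithinAt
      apply ContinuousAt.comp (g := fun y : ℝ => y ^ c)
        (f := fun t : ℝ => (Real.log v - Real.log (2*t)) / Real.log v)
        (Real.continuousAt_rpow_const _ c (Or.inl hbase.ne'))
      apply ContinuousAt.div_const
      apply ContinuousAt.sub continuousAt_const
      exact (Real.continuousAt_log h2t.ne').comp
        ((continuous_const.mul continuous_id).continuousAt)
    · exact (Real.continuous_exp.comp continuous_neg).continuousWithinAt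
  · -- bound
    filter_upwards [eventually_ge_atTop (3:ℝ)] with v hv3
    have hv1 : (1:ℝ) < v := by linarith
    have hlogv1 : 1 ≤ Real.log v := by
      rw [show (1:ℝ) = Real.log (Real.exp 1) from (Real.log_exp 1).symm]
      exact Real.log_le_log (Real.exp_pos 1) (by linarith [Real.exp_one_lt_d9])
    have hlogv : 0 < Real.log v := by linarith
    filter_upwards [ae_restrict_mem measurableSet_Ioi] with t ht
    have ht0 : 0 < t := ht
    by_cases hmem : t ∈ Set.Ioo (0:ℝ) (v/2)
    · rw [Set.indicator_of_mem hmem]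
      have h2t : 0 < 2*t := by linarith
      have hlt : Real.log (2*t) ≤ Real.log v := Real.log_le_log h2t (by linarith [hmem.2])
      have hr0 : 0 ≤ (Real.log v - Real.log (2*t)) / Real.log v :=
        div_nonneg (by linarith) hlogv.le
      have hrM : (Real.log v - Real.log (2*t)) / Real.log v ≤ 1 + max 0 (-Real.log (2*t)) := by
        have hsplit : (Real.log v - Real.log (2*t)) / Real.log v
            = 1 + (-Real.log (2*t)) / Real.log v := by
          field_simp
          ring
        rw [hsplit]
        have hstep : (-Real.log (2*t)) / Real.log v ≤ max 0 (-Real.log (2*t)) := by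
          rcases le_total (-Real.log (2*t)) 0 with h | h
          · calc (-Real.log (2*t)) / Real.log v ≤ 0 :=
                div_nonpos_of_nonpos_of_nonneg h hlogv.le
              _ ≤ max 0 (-Real.log (2*t)) := le_max_left _ _
          · calc (-Real.log (2*t)) / Real.log v ≤ (-Real.log (2*t)) / 1 :=
                div_le_div_of_nonneg_left h one_pos hlogv1
              _ = -Real.log (2*t) := div_one _
              _ ≤ max 0 (-Real.log (2*t)) := le_max_right _ _
        linarith
      have htpow : (0:ℝ) ≤ t ^ s := Real.rpow_nonneg ht0.le s
      rw [Real.norm_eq_abs, abs_of_nonneg (mul_nonneg (mul_nonneg htpow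
        (Real.rpow_nonneg hr0 _)) (Real.exp_nonneg _))]
      exact mul_le_mul_of_nonneg_right (mul_le_mul_of_nonneg_left
        (Real.rpow_le_rpow hr0 hrM hc) htpow) (Real.exp_nonneg _)
    · rw [Set.indicator_of_notMem hmem, norm_zero]
      have hbase0 : (0:ℝ) ≤ 1 + max 0 (-Real.log (2*t)) := by
        have := le_max_left (0:ℝ) (-Real.log (2*t)); linarith
      exact mul_nonneg (mul_nonneg (Real.rpow_nonneg ht0.le _)
        (Real.rpow_nonneg hbase0 _)) (Real.exp_nonneg _)
  · exact bnd_integrable hs hc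
  · -- pointwise limit
    filter_upwards [ae_restrict_mem measurableSet_Ioi] with t ht
    have ht0 : 0 < t := ht
    apply Tendsto.congr' ?_ ?_
      (f₁ := fun v : ℝ => t ^ s * ((Real.log v - Real.log (2*t)) / Real.log v) ^ c * Real.exp (-t))
    · filter_upwards [eventually_gt_atTop (2*t)] with v hv
      rw [Set.indicator_of_mem (Set.mem_Ioo.2 ⟨ht0, by linarith⟩)]
    · have h1 : Tendsto (fun v : ℝ => (Real.log v - Real.log (2*t)) / Real.log v) atTop (nhds 1) := by
        have h2 : Tendsto (fun v : ℝ => 1 - Real.log (2*t) / Real.log v) atTop (nhds (1 - 0)) :=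
          tendsto_const_nhds.sub (tendsto_const_nhds.div_atTop Real.tendsto_log_atTop)
        rw [sub_zero] at h2
        apply Tendsto.congr' ?_ h2
        filter_upwards [eventually_gt_atTop (1:ℝ)] with v hv
        have hlog : 0 < Real.log v := Real.log_pos hv
        field_simp
      have h3 := h1.rpow_const (p := c) (Or.inl one_ne_zero)
      rw [Real.one_rpow] at h3
      have h4 := (tendsto_const_nhds (x := t ^ s)).mul h3
      have h5 := h4.mul (tendsto_const_nhds (x := Real.exp (-t)))
      rw [mul_one] at h5
      exact h5

end Stmt4Aux

/-- For the known-variance generalized Bayes shrinkage function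
ψ(v) = v·[∫₀¹ λ^{p/2−1}(log(1/λ))^b e^{−vλ/2} dλ]/[∫₀¹ λ^{p/2−2}(log(1/λ))^b e^{−vλ/2} dλ],
with p ≥ 3 and b ≥ 1, one has lim_{v→∞} (log v)(p − 2 − ψ(v)) = 2b. -/
theorem stmt4 (p : ℝ) (hp : 3 ≤ p) (b : ℝ) (hb : 1 ≤ b)
    (ψ : ℝ → ℝ)
    (hψ : ∀ v > (0 : ℝ), ψ v = v *
      ((∫ l in Set.Ioo (0 : ℝ) 1,
          l ^ (p / 2 - 1) * Real.log (1 / l) ^ b * Real.exp (-v * l / 2)) /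
        (∫ l in Set.Ioo (0 : ℝ) 1,
          l ^ (p / 2 - 2) * Real.log (1 / l) ^ b * Real.exp (-v * l / 2)))) :
    Tendsto (fun v : ℝ => Real.log v * (p - 2 - ψ v)) atTop (nhds (2 * b)) := by
  have hb0 : (0:ℝ) < b := by linarith
  simp only [one_div, Real.log_inv] at hψ
  have hpa : (0:ℝ) < p/2 - 1 := by linarith
  have hpa2 : p/2 - 2 = p/2 - 1 - 1 := by ring
  simp only [hpa2] at hψ
  set a : ℝ := p/2 - 1 with ha
  have ha1 : (-1:ℝ) < a - 1 := by simp only [ha]; linarith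
  have hΓ : Real.Gamma a ≠ 0 := (Real.Gamma_pos_of_pos hpa).ne'
  have hDb := Stmt4Aux.dct_aux (s := a-1) (c := b) ha1 (by linarith)
  have hDb1 := Stmt4Aux.dct_aux (s := a-1) (c := b-1) ha1 (by linarith)
  rw [show a - 1 + 1 = a by ring] at hDb hDb1
  have hlim : Tendsto (fun v : ℝ => 2*b*((∫ t in Set.Ioo (0:ℝ) (v/2),
      t ^ (a-1) * ((Real.log v - Real.log (2*t))/Real.log v) ^ (b-1) * Real.exp (-t)) /
      (∫ t in Set.Ioo (0:ℝ) (v/2),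
      t ^ (a-1) * ((Real.log v - Real.log (2*t))/Real.log v) ^ b * Real.exp (-t))))
      atTop (nhds (2*b)) := by
    have h := (hDb1.div hDb hΓ).const_mul (2*b)
    rw [div_self hΓ, mul_one] at h
    exact h
  apply Tendsto.congr' ?_ hlim
  filter_upwards [eventually_gt_atTop (3:ℝ)] with v hv3
  have hv0 : (0:ℝ) < v := by linarith
  have hv1 : (1:ℝ) < v := by linarith
  have hlog : 0 < Real.log v := Real.log_pos hv1
  have hibp := Stmt4Aux.ibp_aux (s := a) (c := b) v hpa hb
  have hI2pos := Stmt4Aux.integral_pos_aux (s := a-1) (c := b) v ha1 (by linarith)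
  have hsub2 := Stmt4Aux.subst_aux (s := a-1) (c := b) hv0
  have hsubJ := Stmt4Aux.subst_aux (s := a-1) (c := b-1) hv0
  rw [show a - 1 + 1 = a by ring] at hsub2 hsubJ
  have hpull2 := Stmt4Aux.pull_log_aux (s := a-1) (c := b) (by linarith) hv1
  have hpullJ := Stmt4Aux.pull_log_aux (s := a-1) (c := b-1) (by linarith) hv1
  set Db : ℝ := ∫ t in Set.Ioo (0:ℝ) (v/2),
      t ^ (a-1) * ((Real.log v - Real.log (2*t))/Real.log v) ^ b * Real.exp (-t) with hDbdef
  set Db1 : ℝ := ∫ t in Set.Ioo (0:ℝ) (v/2),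
      t ^ (a-1) * ((Real.log v - Real.log (2*t))/Real.log v) ^ (b-1) * Real.exp (-t) with hDb1def
  set I₁ : ℝ := ∫ l in Set.Ioo (0:ℝ) 1, l ^ a * (-Real.log l) ^ b * Real.exp (-v * l / 2) with hI1def
  set I₂ : ℝ := ∫ l in Set.Ioo (0:ℝ) 1, l ^ (a-1) * (-Real.log l) ^ b * Real.exp (-v * l / 2) with hI2def
  set J : ℝ := ∫ l in Set.Ioo (0:ℝ) 1, l ^ (a-1) * (-Real.log l) ^ (b-1) * Real.exp (-v * l / 2) with hJdef
  have hI2 : I₂ = (2/v)^a * ((Real.log v)^b * Db) := by rw [hsub2, hpull2]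
  have hJ : J = (2/v)^a * ((Real.log v)^(b-1) * Db1) := by rw [hsubJ, hpullJ]
  have h2va : 0 < (2/v)^a := Real.rpow_pos_of_pos (by positivity) a
  have hlogb : 0 < (Real.log v)^b := Real.rpow_pos_of_pos hlog b
  have hlogb1 : 0 < (Real.log v)^(b-1) := Real.rpow_pos_of_pos hlog (b-1)
  have hDbpos : 0 < Db := by
    by_contra hcon
    push_neg at hcon
    have : I₂ ≤ 0 := by
      rw [hI2]
      have : (Real.log v)^b * Db ≤ 0 := mul_nonpos_of_nonneg_of_nonpos hlogb.le hcon
      exact mul_nonpos_of_nonneg_of_nonpos h2va.le this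
    linarith [hI2pos]
  rw [hψ v hv0]
  have hIJ : v * I₁ = 2*a*I₂ - 2*b*J := by linear_combination 2*hibp
  have hp2 : p - 2 - v * (I₁/I₂) = 2*b*(J/I₂) := by
    have h1 : v * (I₁/I₂) = (v*I₁)/I₂ := by ring
    have h2 : p - 2 = 2*a := by rw [ha]; ring
    rw [h1, hIJ, h2]
    field_simp
    ring
  rw [hp2, hJ, hI2]
  have hbb : (Real.log v)^b = (Real.log v)^(b-1) * Real.log v := by
    rw [← Real.rpow_add_one hlog.ne' (b-1), sub_add_cancel]
  rw [hbb]
  field_simp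
end

section
/- For p ≥ 3, n ≥ 3 and b > 0, the function φ(w) = w · [∫₀¹ λ^{p/2−1}(log(1/λ))^b (1+wλ)^{−(p+n)/2−1} dλ] / [∫₀¹ λ^{p/2−2}(log(1/λ))^b (1+wλ)^{−(p+n)/2−1} dλ] admits the exact identity φ(w) = (p−2)/(n+2) − (2b/(n+2)) · [∫₀¹ λ^{p/2−2}(log(1/λ))^{b−1}(1+wλ)^{−(p+n)/2} dλ] / [∫₀¹ λ^{p/2−2}(log(1/λ))^b (1+wλ)^{−(p+n)/2−1} dλ] for every w > 0. -/
open MeasureTheory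

open Set Filter Topology

lemma stmt5_contOn (s t : ℝ) :
    ContinuousOn (fun l : ℝ => l ^ s * Real.log (1 / l) ^ t) (Set.Ioo 0 1) := by
  apply ContinuousOn.mul
  · exact continuousOn_id.rpow_const fun x hx => Or.inl (ne_of_gt hx.1)
  · apply ContinuousOn.rpow_const
    · apply ContinuousOn.log
      · exact continuousOn_const.div continuousOn_id fun x hx => ne_of_gt hx.1
      · intro x hx
        exact (one_div_pos.mpr hx.1).ne'
    · intro x hx
      left
      have : (0:ℝ) < Real.log (1 / x) := Real.log_pos (by rw [lt_div_iff₀ hx.1]; linarith [hx.2])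
      exact this.ne'

lemma stmt5_aux_integrable (s t : ℝ) (hs : -1 < s) (ht : -1 < t) :
    IntegrableOn (fun l : ℝ => l ^ s * Real.log (1 / l) ^ t) (Set.Ioo (0:ℝ) 1) := by
  have hsub1 : Set.Ioc (0:ℝ) (1/2) ⊆ Set.Ioo 0 1 := fun x hx => ⟨hx.1, by linarith [hx.2]⟩
  have hsub2 : Set.Ioo (1/2:ℝ) 1 ⊆ Set.Ioo 0 1 := fun x hx => ⟨by linarith [hx.1], hx.2⟩
  have hmeas1 : AEStronglyMeasurable (fun l : ℝ => l ^ s * Real.log (1 / l) ^ t)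
      (volume.restrict (Set.Ioc (0:ℝ) (1/2))) :=
    ((stmt5_contOn s t).mono hsub1).aestronglyMeasurable measurableSet_Ioc
  have hmeas2 : AEStronglyMeasurable (fun l : ℝ => l ^ s * Real.log (1 / l) ^ t)
      (volume.restrict (Set.Ioo (1/2:ℝ) 1)) :=
    ((stmt5_contOn s t).mono hsub2).aestronglyMeasurable measurableSet_Ioo
  have hnonneg : ∀ l : ℝ, l ∈ Set.Ioo (0:ℝ) 1 → 0 ≤ l ^ s * Real.log (1 / l) ^ t := by
    intro l hl
    have h1 : (0:ℝ) ≤ l ^ s := Real.rpow_nonneg hl.1.le s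
    have h2 : (0:ℝ) ≤ Real.log (1 / l) ^ t :=
      Real.rpow_nonneg (Real.log_nonneg (by rw [le_div_iff₀ hl.1]; linarith [hl.2])) t
    positivity
  -- near zero
  have part1 : IntegrableOn (fun l : ℝ => l ^ s * Real.log (1 / l) ^ t) (Set.Ioc (0:ℝ) (1/2)) := by
    rcases le_or_gt t 0 with htn | htp
    · have hint : IntegrableOn (fun l : ℝ => Real.log 2 ^ t * l ^ s) (Set.Ioc (0:ℝ) (1/2)) := by
        have := (intervalIntegral.intervalIntegrable_rpow' (a := 0) (b := 1/2) hs).const_mul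
          (Real.log 2 ^ t)
        exact (intervalIntegrable_iff_integrableOn_Ioc_of_le (by norm_num)).1 this
      refine hint.mono' hmeas1 ?_
      rw [ae_restrict_iff' measurableSet_Ioc]
      refine Filter.Eventually.of_forall fun l hl => ?_
      have hl0 := hl.1
      have hl1 : l < 1 := by linarith [hl.2]
      have hLge : Real.log 2 ≤ Real.log (1 / l) := by
        apply Real.log_le_log (by norm_num)
        rw [le_div_iff₀ hl0]; linarith [hl.2]
      have hL2 : (0:ℝ) < Real.log 2 := Real.log_pos (by norm_num)
      have hb : Real.log (1 / l) ^ t ≤ Real.log 2 ^ t :=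
        Real.rpow_le_rpow_of_nonpos hL2 hLge htn
      rw [Real.norm_eq_abs, abs_of_nonneg (hnonneg l ⟨hl0, hl1⟩)]
      calc l ^ s * Real.log (1 / l) ^ t ≤ l ^ s * Real.log 2 ^ t :=
            mul_le_mul_of_nonneg_left hb (Real.rpow_nonneg hl0.le s)
        _ = Real.log 2 ^ t * l ^ s := by ring
    · set ε : ℝ := (s + 1) / (2 * t) with hεdef
      have hε : 0 < ε := div_pos (by linarith) (by linarith)
      have hεt : ε * t = (s + 1) / 2 := by
        rw [hεdef, div_mul_eq_mul_div, div_eq_div_iff (mul_pos two_pos htp).ne' two_ne_zero]; ring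
      have hr : (-1:ℝ) < (s - 1) / 2 := by linarith
      have hint : IntegrableOn (fun l : ℝ => (ε ^ t)⁻¹ * l ^ ((s-1)/2)) (Set.Ioc (0:ℝ) (1/2)) := by
        have := (intervalIntegral.intervalIntegrable_rpow' (a := 0) (b := 1/2) hr).const_mul (ε ^ t)⁻¹
        exact (intervalIntegrable_iff_integrableOn_Ioc_of_le (by norm_num)).1 this
      refine hint.mono' hmeas1 ?_
      rw [ae_restrict_iff' measurableSet_Ioc]
      refine Filter.Eventually.of_forall fun l hl => ?_
      have hl0 := hl.1
      have hl1 : l < 1 := by linarith [hl.2]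
      have hLnn : (0:ℝ) ≤ Real.log (1 / l) :=
        Real.log_nonneg (by rw [le_div_iff₀ hl0]; linarith [hl.2])
      have hlog : Real.log (1 / l) ≤ (1 / l) ^ ε / ε :=
        Real.log_le_rpow_div (by positivity) hε
      have hb : Real.log (1 / l) ^ t ≤ ((1 / l) ^ ε / ε) ^ t :=
        Real.rpow_le_rpow hLnn hlog htp.le
      have heq : ((1 / l) ^ ε / ε) ^ t = (ε ^ t)⁻¹ * l ^ (-((s+1)/2)) := by
        rw [Real.div_rpow (Real.rpow_nonneg (by positivity) ε) hε.le,
          ← Real.rpow_mul (by positivity), hεt, one_div, Real.inv_rpow hl0.le,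
          ← Real.rpow_neg hl0.le, div_eq_mul_inv, mul_comm]
      rw [Real.norm_eq_abs, abs_of_nonneg (hnonneg l ⟨hl0, hl1⟩)]
      calc l ^ s * Real.log (1 / l) ^ t
          ≤ l ^ s * ((ε ^ t)⁻¹ * l ^ (-((s+1)/2))) :=
            mul_le_mul_of_nonneg_left (heq ▸ hb) (Real.rpow_nonneg hl0.le s)
        _ = (ε ^ t)⁻¹ * l ^ ((s-1)/2) := by
            rw [show (s-1)/2 = s + -((s+1)/2) by ring, Real.rpow_add hl0]; ring
  -- near one
  have part2 : IntegrableOn (fun l : ℝ => l ^ s * Real.log (1 / l) ^ t) (Set.Ioo (1/2:ℝ) 1) := by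
    set M : ℝ := max 1 ((1/2:ℝ) ^ s) with hMdef
    have hM0 : 0 ≤ M := le_trans zero_le_one (le_max_left _ _)
    have hMl : ∀ l : ℝ, l ∈ Set.Ioo (1/2:ℝ) 1 → l ^ s ≤ M := by
      intro l hl
      rcases le_or_gt 0 s with hs0 | hs0
      · exact le_trans (Real.rpow_le_one (by linarith [hl.1]) hl.2.le hs0) (le_max_left _ _)
      · exact le_trans (Real.rpow_le_rpow_of_nonpos (by norm_num) hl.1.le hs0.le)
          (le_max_right _ _)
    rcases le_or_gt 0 t with htp | htn
    · have hint : IntegrableOn (fun _ : ℝ => M) (Set.Ioo (1/2:ℝ) 1) :=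
        integrableOn_const (by rw [Real.volume_Ioo]; exact ENNReal.ofReal_ne_top)
      refine hint.mono' hmeas2 ?_
      rw [ae_restrict_iff' measurableSet_Ioo]
      refine Filter.Eventually.of_forall fun l hl => ?_
      have hl0 : (0:ℝ) < l := by linarith [hl.1]
      have hLnn : (0:ℝ) ≤ Real.log (1 / l) :=
        Real.log_nonneg (by rw [le_div_iff₀ hl0]; linarith [hl.2])
      have hLle : Real.log (1 / l) ≤ 1 := by
        have : Real.log (1 / l) ≤ Real.log 2 := by
          apply Real.log_le_log (by positivity)
          rw [div_le_iff₀ hl0]; linarith [hl.1]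
        linarith [Real.log_two_lt_d9]
      rw [Real.norm_eq_abs, abs_of_nonneg (hnonneg l ⟨hl0, hl.2⟩)]
      calc l ^ s * Real.log (1 / l) ^ t ≤ M * 1 := by
            apply mul_le_mul (hMl l hl) (Real.rpow_le_one hLnn hLle htp)
              (Real.rpow_nonneg hLnn t) hM0
        _ = M := mul_one M
    · have hint : IntegrableOn (fun l : ℝ => M * (1 - l) ^ t) (Set.Ioo (1/2:ℝ) 1) := by
        have h2 := ((intervalIntegral.intervalIntegrable_rpow' (a := 1/2) (b := 0)
          ht).comp_sub_left 1).const_mul M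
        have h3 := (intervalIntegrable_iff_integrableOn_Ioc_of_le
          (by norm_num : (1:ℝ) - 1/2 ≤ 1 - 0)).1 h2
        have hss : Set.Ioo (1/2:ℝ) 1 ⊆ Set.Ioc (1 - 1/2 : ℝ) (1 - 0) := by
          intro x hx
          exact ⟨by linarith [hx.1], by linarith [hx.2]⟩
        exact h3.mono_set hss
      refine hint.mono' hmeas2 ?_
      rw [ae_restrict_iff' measurableSet_Ioo]
      refine Filter.Eventually.of_forall fun l hl => ?_
      have hl0 : (0:ℝ) < l := by linarith [hl.1]
      have h1l : (0:ℝ) < 1 - l := by linarith [hl.2]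
      have hLge : 1 - l ≤ Real.log (1 / l) := by
        have := Real.log_le_sub_one_of_pos hl0
        rw [one_div, Real.log_inv]; linarith
      have hb : Real.log (1 / l) ^ t ≤ (1 - l) ^ t :=
        Real.rpow_le_rpow_of_nonpos h1l hLge htn.le
      rw [Real.norm_eq_abs, abs_of_nonneg (hnonneg l ⟨hl0, hl.2⟩)]
      exact mul_le_mul (hMl l hl) hb (Real.rpow_nonneg (Real.log_nonneg (by
        rw [le_div_iff₀ hl0]; linarith [hl.2])) t) hM0
  have hcover : Set.Ioo (0:ℝ) 1 ⊆ Set.Ioc (0:ℝ) (1/2) ∪ Set.Ioo (1/2:ℝ) 1 := by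
    intro x hx
    rcases le_or_gt x (1/2) with h | h
    · exact Or.inl ⟨hx.1, h⟩
    · exact Or.inr ⟨h, hx.2⟩
  exact (part1.union part2).mono_set hcover

lemma stmt5_contOn3 (s t e w : ℝ) (hw : 0 < w) :
    ContinuousOn (fun l : ℝ => l ^ s * Real.log (1 / l) ^ t * (1 + w * l) ^ e)
      (Set.Ioo 0 1) := by
  apply (stmt5_contOn s t).mul
  apply ContinuousOn.rpow_const
  · exact continuousOn_const.add (continuousOn_const.mul continuousOn_id)
  · intro x hx
    left
    have : (0:ℝ) < 1 + w * x := by nlinarith [hx.1]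
    exact this.ne'

lemma stmt5_integrable (s t e w : ℝ) (hs : -1 < s) (ht : -1 < t) (he : e ≤ 0) (hw : 0 < w) :
    IntegrableOn (fun l : ℝ => l ^ s * Real.log (1 / l) ^ t * (1 + w * l) ^ e)
      (Set.Ioo (0:ℝ) 1) := by
  refine (stmt5_aux_integrable s t hs ht).mono'
    ((stmt5_contOn3 s t e w hw).aestronglyMeasurable measurableSet_Ioo) ?_
  rw [ae_restrict_iff' measurableSet_Ioo]
  refine Filter.Eventually.of_forall fun l hl => ?_
  have hl0 := hl.1
  have hLnn : (0:ℝ) ≤ Real.log (1 / l) :=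
    Real.log_nonneg (by rw [le_div_iff₀ hl0]; linarith [hl.2])
  have hP : (1:ℝ) ≤ 1 + w * l := by nlinarith
  have h1 : (0:ℝ) ≤ l ^ s * Real.log (1 / l) ^ t :=
    mul_nonneg (Real.rpow_nonneg hl0.le s) (Real.rpow_nonneg hLnn t)
  rw [Real.norm_eq_abs, abs_of_nonneg (mul_nonneg h1 (Real.rpow_nonneg (by linarith) e))]
  calc l ^ s * Real.log (1 / l) ^ t * (1 + w * l) ^ e
      ≤ l ^ s * Real.log (1 / l) ^ t * 1 :=
        mul_le_mul_of_nonneg_left (Real.rpow_le_one_of_one_le_of_nonpos hP he) h1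
    _ = l ^ s * Real.log (1 / l) ^ t := mul_one _

lemma stmt5_hasDerivAt (p n b w : ℝ) (hb : 0 < b) (hw : 0 < w)
    {l : ℝ} (hl : l ∈ Set.Ioo (0:ℝ) 1) :
    HasDerivAt
      (fun x : ℝ => x ^ (p / 2 - 1) * Real.log (1 / x) ^ b * (1 + w * x) ^ (-(p + n) / 2))
      ((p / 2 - 1) *
          (l ^ (p / 2 - 2) * Real.log (1 / l) ^ b * (1 + w * l) ^ (-(p + n) / 2 - 1)) -
        ((n + 2) / 2 * w) *
          (l ^ (p / 2 - 1) * Real.log (1 / l) ^ b * (1 + w * l) ^ (-(p + n) / 2 - 1)) -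
        b * (l ^ (p / 2 - 2) * Real.log (1 / l) ^ (b - 1) * (1 + w * l) ^ (-(p + n) / 2))) l := by
  obtain ⟨hl0, hl1⟩ := hl
  have hL : (0:ℝ) < Real.log (1 / l) := Real.log_pos (by rw [lt_div_iff₀ hl0]; linarith)
  have hP : (0:ℝ) < 1 + w * l := by nlinarith
  have d1 : HasDerivAt (fun x : ℝ => x ^ (p / 2 - 1)) ((p / 2 - 1) * l ^ (p / 2 - 1 - 1)) l :=
    Real.hasDerivAt_rpow_const (Or.inl hl0.ne')
  have d2a : HasDerivAt (fun x : ℝ => 1 / x) (-(1 / l ^ 2)) l := by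
    simpa [one_div] using hasDerivAt_inv hl0.ne'
  have d2b : HasDerivAt (fun x : ℝ => Real.log (1 / x)) (-(1 / l ^ 2) / (1 / l)) l :=
    d2a.log (one_div_pos.mpr hl0).ne'
  have d2 : HasDerivAt (fun x : ℝ => Real.log (1 / x) ^ b)
      (-(1 / l ^ 2) / (1 / l) * b * Real.log (1 / l) ^ (b - 1)) l :=
    d2b.rpow_const (Or.inl hL.ne')
  have d3a : HasDerivAt (fun x : ℝ => 1 + w * x) w l := by
    simpa using ((hasDerivAt_id l).const_mul w).const_add 1
  have d3 : HasDerivAt (fun x : ℝ => (1 + w * x) ^ (-(p + n) / 2))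
      (w * (-(p + n) / 2) * (1 + w * l) ^ (-(p + n) / 2 - 1)) l :=
    d3a.rpow_const (Or.inl hP.ne')
  have dF := (d1.mul d2).mul d3
  refine dF.congr_deriv ?_
  simp only [Pi.mul_apply]
  have e2 : l ^ (p / 2 - 1) = l ^ (p / 2 - 2) * l := by
    rw [show p / 2 - 1 = p / 2 - 2 + 1 by ring, Real.rpow_add_one hl0.ne']
  have e1 : l ^ (p / 2 - 1 - 1) = l ^ (p / 2 - 2) := by
    rw [show p / 2 - 1 - 1 = p / 2 - 2 by ring]
  have e3 : Real.log (1 / l) ^ b = Real.log (1 / l) ^ (b - 1) * Real.log (1 / l) := by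
    rw [← Real.rpow_add_one hL.ne' (b - 1)]; norm_num
  have e4 : (1 + w * l) ^ (-(p + n) / 2) =
      (1 + w * l) ^ (-(p + n) / 2 - 1) * (1 + w * l) := by
    rw [← Real.rpow_add_one hP.ne' (-(p + n) / 2 - 1)]; norm_num
  have e5 : -(1 / l ^ 2) / (1 / l) = -(1 / l) := by
    field_simp
  rw [e1, e2, e3, e4, e5]
  have hlne : l ≠ 0 := hl0.ne'
  field_simp
  ring

lemma stmt5_tendsto_zero (a b e w : ℝ) (ha : 0 < a) (hb : 0 < b) (hw : 0 < w) :
    Filter.Tendsto (fun l : ℝ => l ^ a * Real.log (1 / l) ^ b * (1 + w * l) ^ e)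
      (nhdsWithin 0 (Set.Ioi 0)) (nhds 0) := by
  have t1 : Filter.Tendsto (fun l : ℝ => Real.log l * l ^ (a / b))
      (nhdsWithin 0 (Set.Ioi 0)) (nhds 0) :=
    tendsto_log_mul_rpow_nhdsGT_zero (div_pos ha hb)
  have t2 : Filter.Tendsto (fun l : ℝ => -(Real.log l * l ^ (a / b)))
      (nhdsWithin 0 (Set.Ioi 0)) (nhds 0) := by
    simpa using t1.neg
  have t3 : ContinuousAt (fun x : ℝ => x ^ b) 0 :=
    Real.continuousAt_rpow_const 0 b (Or.inr hb.le)
  have t4 := t3.tendsto.comp t2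
  rw [Real.zero_rpow hb.ne'] at t4
  have t5 : Filter.Tendsto (fun l : ℝ => l ^ a * Real.log (1 / l) ^ b)
      (nhdsWithin 0 (Set.Ioi 0)) (nhds 0) := by
    apply t4.congr'
    filter_upwards [Ioo_mem_nhdsGT_of_mem (Set.left_mem_Ico.2 one_pos)] with l hl
    have hl0 := hl.1
    have hl1 := hl.2
    have hlogn : (0:ℝ) ≤ -Real.log l := neg_nonneg.2 (Real.log_nonpos hl0.le hl1.le)
    show (-(Real.log l * l ^ (a / b))) ^ b = l ^ a * Real.log (1 / l) ^ b
    rw [one_div, Real.log_inv]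
    rw [show -(Real.log l * l ^ (a / b)) = -Real.log l * l ^ (a / b) by ring,
      Real.mul_rpow hlogn (Real.rpow_nonneg hl0.le _), ← Real.rpow_mul hl0.le,
      div_mul_cancel₀ _ hb.ne']
    ring
  have t6 : Filter.Tendsto (fun l : ℝ => (1 + w * l) ^ e)
      (nhdsWithin 0 (Set.Ioi 0)) (nhds 1) := by
    have hc : ContinuousAt (fun l : ℝ => (1 + w * l) ^ e) 0 := by
      apply ContinuousAt.rpow_const
      · exact (continuous_const.add (continuous_const.mul continuous_id)).continuousAt
      · left; norm_num
    have hv : (fun l : ℝ => (1 + w * l) ^ e) 0 = 1 := by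
      norm_num
    have h7 : Filter.Tendsto (fun l : ℝ => (1 + w * l) ^ e)
        (nhdsWithin 0 (Set.Ioi 0)) (nhds ((fun l : ℝ => (1 + w * l) ^ e) 0)) :=
      hc.tendsto.mono_left nhdsWithin_le_nhds
    rwa [hv] at h7
  simpa using t5.mul t6

lemma stmt5_tendsto_one (a b e w : ℝ) (hb : 0 < b) (hw : 0 < w) :
    Filter.Tendsto (fun l : ℝ => l ^ a * Real.log (1 / l) ^ b * (1 + w * l) ^ e)
      (nhdsWithin 1 (Set.Iio 1)) (nhds 0) := by
  have u1 : Filter.Tendsto (fun l : ℝ => Real.log (1 / l)) (nhdsWithin 1 (Set.Iio 1))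
      (nhds 0) := by
    have hc : ContinuousAt (fun l : ℝ => Real.log (1 / l)) 1 := by
      apply ContinuousAt.log
      · exact continuousAt_const.div continuousAt_id one_ne_zero
      · norm_num
    have hv : (fun l : ℝ => Real.log (1 / l)) 1 = 0 := by norm_num
    have h7 : Filter.Tendsto (fun l : ℝ => Real.log (1 / l))
        (nhdsWithin 1 (Set.Iio 1)) (nhds ((fun l : ℝ => Real.log (1 / l)) 1)) :=
      hc.tendsto.mono_left nhdsWithin_le_nhds
    rwa [hv] at h7
  have u2 := (Real.continuousAt_rpow_const 0 b (Or.inr hb.le)).tendsto.comp u1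
  rw [Real.zero_rpow hb.ne'] at u2
  have u3 : Filter.Tendsto (fun l : ℝ => l ^ a) (nhdsWithin 1 (Set.Iio 1)) (nhds 1) := by
    have hc : ContinuousAt (fun l : ℝ => l ^ a) 1 :=
      Real.continuousAt_rpow_const 1 a (Or.inl one_ne_zero)
    have h7 : Filter.Tendsto (fun l : ℝ => l ^ a)
        (nhdsWithin 1 (Set.Iio 1)) (nhds ((fun l : ℝ => l ^ a) 1)) :=
      hc.tendsto.mono_left nhdsWithin_le_nhds
    simpa [Real.one_rpow] using h7
  have u4 : Filter.Tendsto (fun l : ℝ => (1 + w * l) ^ e) (nhdsWithin 1 (Set.Iio 1))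
      (nhds ((1 + w) ^ e)) := by
    have hc : ContinuousAt (fun l : ℝ => (1 + w * l) ^ e) 1 := by
      apply ContinuousAt.rpow_const
      · exact (continuous_const.add (continuous_const.mul continuous_id)).continuousAt
      · left; simp; nlinarith
    have h7 : Filter.Tendsto (fun l : ℝ => (1 + w * l) ^ e)
        (nhdsWithin 1 (Set.Iio 1)) (nhds ((fun l : ℝ => (1 + w * l) ^ e) 1)) :=
      hc.tendsto.mono_left nhdsWithin_le_nhds
    simpa [mul_one] using h7
  have := (u3.mul u2).mul u4
  simpa using this

/-- Exact integration-by-parts identity for the unknown-variance generalized Bayes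
shrinkage function φ(w), for every w > 0 (p ≥ 3, n ≥ 3, b > 0). -/
theorem stmt5 (p n : ℝ) (hp : 3 ≤ p) (hn : 3 ≤ n) (b : ℝ) (hb : 0 < b)
    (w : ℝ) (hw : 0 < w) :
    w * ((∫ l in Set.Ioo (0 : ℝ) 1,
          l ^ (p / 2 - 1) * Real.log (1 / l) ^ b * (1 + w * l) ^ (-(p + n) / 2 - 1)) /
        (∫ l in Set.Ioo (0 : ℝ) 1,
          l ^ (p / 2 - 2) * Real.log (1 / l) ^ b * (1 + w * l) ^ (-(p + n) / 2 - 1))) =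
      (p - 2) / (n + 2) - (2 * b / (n + 2)) *
        ((∫ l in Set.Ioo (0 : ℝ) 1,
            l ^ (p / 2 - 2) * Real.log (1 / l) ^ (b - 1) * (1 + w * l) ^ (-(p + n) / 2)) /
          (∫ l in Set.Ioo (0 : ℝ) 1,
            l ^ (p / 2 - 2) * Real.log (1 / l) ^ b * (1 + w * l) ^ (-(p + n) / 2 - 1))) := by
  have hIA : IntegrableOn (fun l : ℝ =>
      l ^ (p / 2 - 1) * Real.log (1 / l) ^ b * (1 + w * l) ^ (-(p + n) / 2 - 1))
      (Set.Ioo (0:ℝ) 1) :=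
    stmt5_integrable _ _ _ _ (by linarith) (by linarith) (by linarith) hw
  have hIB : IntegrableOn (fun l : ℝ =>
      l ^ (p / 2 - 2) * Real.log (1 / l) ^ b * (1 + w * l) ^ (-(p + n) / 2 - 1))
      (Set.Ioo (0:ℝ) 1) :=
    stmt5_integrable _ _ _ _ (by linarith) (by linarith) (by linarith) hw
  have hIC : IntegrableOn (fun l : ℝ =>
      l ^ (p / 2 - 2) * Real.log (1 / l) ^ (b - 1) * (1 + w * l) ^ (-(p + n) / 2))
      (Set.Ioo (0:ℝ) 1) :=
    stmt5_integrable _ _ _ _ (by linarith) (by linarith) (by linarith) hw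
  set DF : ℝ → ℝ := fun l =>
      (p / 2 - 1) *
          (l ^ (p / 2 - 2) * Real.log (1 / l) ^ b * (1 + w * l) ^ (-(p + n) / 2 - 1)) -
        ((n + 2) / 2 * w) *
          (l ^ (p / 2 - 1) * Real.log (1 / l) ^ b * (1 + w * l) ^ (-(p + n) / 2 - 1)) -
        b * (l ^ (p / 2 - 2) * Real.log (1 / l) ^ (b - 1) * (1 + w * l) ^ (-(p + n) / 2))
    with hDF
  have hIDF : IntegrableOn DF (Set.Ioo (0:ℝ) 1) :=
    ((hIB.const_mul _).sub (hIA.const_mul _)).sub (hIC.const_mul _)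
  have hII : IntervalIntegrable DF volume 0 1 :=
    (intervalIntegrable_iff_integrableOn_Ioc_of_le zero_le_one).2
      (hIDF.congr_set_ae Ioo_ae_eq_Ioc.symm)
  have hFTC : ∫ y in (0:ℝ)..1, DF y = 0 - 0 :=
    intervalIntegral.integral_eq_sub_of_hasDerivAt_of_tendsto zero_lt_one
      (fun l hl => stmt5_hasDerivAt p n b w hb hw hl) hII
      (stmt5_tendsto_zero (p / 2 - 1) b (-(p + n) / 2) w (by linarith) hb hw)
      (stmt5_tendsto_one (p / 2 - 1) b (-(p + n) / 2) w hb hw)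
  have hIoo : ∫ l in Set.Ioo (0:ℝ) 1, DF l = 0 := by
    rw [← MeasureTheory.integral_Ioc_eq_integral_Ioo,
      ← intervalIntegral.integral_of_le zero_le_one]
    simpa using hFTC
  simp only [hDF] at hIoo
  have h1 : Integrable (fun l : ℝ =>
      (p / 2 - 1) * (l ^ (p / 2 - 2) * Real.log (1 / l) ^ b * (1 + w * l) ^ (-(p + n) / 2 - 1)) -
        (n + 2) / 2 * w *
          (l ^ (p / 2 - 1) * Real.log (1 / l) ^ b * (1 + w * l) ^ (-(p + n) / 2 - 1)))
      (volume.restrict (Set.Ioo (0:ℝ) 1)) := (hIB.const_mul _).sub (hIA.const_mul _)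
  have h2 : Integrable (fun l : ℝ =>
      b * (l ^ (p / 2 - 2) * Real.log (1 / l) ^ (b - 1) * (1 + w * l) ^ (-(p + n) / 2)))
      (volume.restrict (Set.Ioo (0:ℝ) 1)) := hIC.const_mul _
  have h3 : Integrable (fun l : ℝ =>
      (p / 2 - 1) * (l ^ (p / 2 - 2) * Real.log (1 / l) ^ b * (1 + w * l) ^ (-(p + n) / 2 - 1)))
      (volume.restrict (Set.Ioo (0:ℝ) 1)) := hIB.const_mul _
  have h4 : Integrable (fun l : ℝ =>
      (n + 2) / 2 * w *
        (l ^ (p / 2 - 1) * Real.log (1 / l) ^ b * (1 + w * l) ^ (-(p + n) / 2 - 1)))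
      (volume.restrict (Set.Ioo (0:ℝ) 1)) := hIA.const_mul _
  rw [MeasureTheory.integral_sub h1 h2, MeasureTheory.integral_sub h3 h4,
    MeasureTheory.integral_const_mul, MeasureTheory.integral_const_mul,
    MeasureTheory.integral_const_mul] at hIoo
  have hBpos : 0 < ∫ l in Set.Ioo (0:ℝ) 1,
      l ^ (p / 2 - 2) * Real.log (1 / l) ^ b * (1 + w * l) ^ (-(p + n) / 2 - 1) := by
    have hiiB : IntervalIntegrable (fun l : ℝ =>
        l ^ (p / 2 - 2) * Real.log (1 / l) ^ b * (1 + w * l) ^ (-(p + n) / 2 - 1))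
        volume 0 1 :=
      (intervalIntegrable_iff_integrableOn_Ioc_of_le zero_le_one).2
        (hIB.congr_set_ae Ioo_ae_eq_Ioc.symm)
    have hpos : ∀ x ∈ Set.Ioo (0:ℝ) 1, 0 <
        x ^ (p / 2 - 2) * Real.log (1 / x) ^ b * (1 + w * x) ^ (-(p + n) / 2 - 1) := by
      intro x hx
      have hx0 := hx.1
      have hL : (0:ℝ) < Real.log (1 / x) :=
        Real.log_pos (by rw [lt_div_iff₀ hx0]; linarith [hx.2])
      have hP : (0:ℝ) < 1 + w * x := by nlinarith
      exact mul_pos (mul_pos (Real.rpow_pos_of_pos hx0 _) (Real.rpow_pos_of_pos hL _))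
        (Real.rpow_pos_of_pos hP _)
    have := intervalIntegral.intervalIntegral_pos_of_pos_on hiiB hpos zero_lt_one
    rwa [intervalIntegral.integral_of_le zero_le_one,
      MeasureTheory.integral_Ioc_eq_integral_Ioo] at this
  set A := ∫ l in Set.Ioo (0 : ℝ) 1,
      l ^ (p / 2 - 1) * Real.log (1 / l) ^ b * (1 + w * l) ^ (-(p + n) / 2 - 1) with hA
  set B := ∫ l in Set.Ioo (0 : ℝ) 1,
      l ^ (p / 2 - 2) * Real.log (1 / l) ^ b * (1 + w * l) ^ (-(p + n) / 2 - 1) with hB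
  set C := ∫ l in Set.Ioo (0 : ℝ) 1,
      l ^ (p / 2 - 2) * Real.log (1 / l) ^ (b - 1) * (1 + w * l) ^ (-(p + n) / 2) with hC
  have hBne : B ≠ 0 := ne_of_gt hBpos
  have hn2 : (n + 2 : ℝ) ≠ 0 := by linarith
  field_simp
  linear_combination (-2) * hIoo
end

section
/- For p ≥ 3, n ≥ 3 and b ≥ 1, lim_{w→∞} (log w) · [∫₀¹ λ^{p/2−2}(log(1/λ))^{b−1}(1+wλ)^{−(p+n)/2} dλ] / [∫₀¹ λ^{p/2−2}(log(1/λ))^b (1+wλ)^{−(p+n)/2−1} dλ] = (p+n)/(n+2). -/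
open MeasureTheory Filter Set Real


lemma meas_aux (a s : ℝ) : Measurable (fun t : ℝ => t ^ a * (1 + t) ^ (-s)) := by
  fun_prop

lemma integrableOn_pow_tail {a s : ℝ} (ha : -1 < a) (hs : a + 1 < s) :
    IntegrableOn (fun t : ℝ => t ^ a * (1 + t) ^ (-s)) (Set.Ioi 0) := by
  have hmeas : Measurable (fun t : ℝ => t ^ a * (1 + t) ^ (-s)) := by fun_prop
  have h01 : IntegrableOn (fun t : ℝ => t ^ a * (1 + t) ^ (-s)) (Set.Ioc 0 1) := by
    have hg : IntegrableOn (fun t : ℝ => t ^ a) (Set.Ioc 0 1) := by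
      have := (intervalIntegral.intervalIntegrable_rpow' (a := 0) (b := 1) ha)
      rwa [intervalIntegrable_iff_integrableOn_Ioc_of_le (by norm_num)] at this
    refine hg.mono' hmeas.aestronglyMeasurable.restrict ?_
    filter_upwards [ae_restrict_mem measurableSet_Ioc] with t ht
    have ht0 : 0 < t := ht.1
    have h1 : (1 + t) ^ (-s) ≤ 1 :=
      Real.rpow_le_one_of_one_le_of_nonpos (by linarith) (by linarith)
    have h2 : 0 ≤ t ^ a := Real.rpow_nonneg ht0.le a
    have h3 : 0 ≤ (1 + t) ^ (-s) := Real.rpow_nonneg (by linarith) _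
    rw [Real.norm_eq_abs, abs_of_nonneg (mul_nonneg h2 h3)]
    nlinarith
  have h1i : IntegrableOn (fun t : ℝ => t ^ a * (1 + t) ^ (-s)) (Set.Ioi 1) := by
    have hg : IntegrableOn (fun t : ℝ => t ^ (a - s)) (Set.Ioi 1) :=
      integrableOn_Ioi_rpow_of_lt (by linarith) one_pos
    refine hg.mono' hmeas.aestronglyMeasurable.restrict ?_
    filter_upwards [ae_restrict_mem measurableSet_Ioi] with t ht
    have ht0 : (0:ℝ) < t := lt_trans one_pos ht
    have h1 : (1 + t) ^ (-s) ≤ t ^ (-s) :=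
      Real.rpow_le_rpow_of_nonpos ht0 (by linarith) (by linarith)
    have h2 : 0 ≤ t ^ a := Real.rpow_nonneg ht0.le a
    have h3 : 0 ≤ (1 + t) ^ (-s) := Real.rpow_nonneg (by linarith) _
    rw [Real.norm_eq_abs, abs_of_nonneg (mul_nonneg h2 h3)]
    calc t ^ a * (1 + t) ^ (-s) ≤ t ^ a * t ^ (-s) := by nlinarith
    _ = t ^ (a - s) := by rw [← Real.rpow_add ht0]; ring_nf
  have : Set.Ioi (0:ℝ) = Set.Ioc 0 1 ∪ Set.Ioi 1 := (Set.Ioc_union_Ioi_eq_Ioi (by norm_num)).symm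
  rw [this]
  exact h01.union h1i


lemma integrableOn_bound {a c s : ℝ} (ha : -1 < a) (hc : 0 ≤ c) (hs : a + 1 < s) :
    IntegrableOn (fun t : ℝ => t ^ a * (1 + max 0 (Real.log t⁻¹)) ^ c * (1 + t) ^ (-s))
      (Set.Ioi 0) := by
  set ε : ℝ := (a + 1) / (2 * (c + 1)) with hεdef
  have hε : 0 < ε := div_pos (by linarith) (by linarith)
  have hεc : ε * c < a + 1 := by
    have h2 : ε * (2 * (c + 1)) = a + 1 := by
      rw [hεdef]; field_simp
    nlinarith
  set K : ℝ := 1 + 1 / ε with hKdef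
  have hK0 : 0 < K := by positivity
  have hmeas : Measurable
      (fun t : ℝ => t ^ a * (1 + max 0 (Real.log t⁻¹)) ^ c * (1 + t) ^ (-s)) := by
    have m1 : Measurable fun t : ℝ => (1 + max 0 (Real.log t⁻¹)) := by
      apply Measurable.const_add
      exact measurable_const.max (Real.measurable_log.comp measurable_inv)
    fun_prop
  have h01 : IntegrableOn
      (fun t : ℝ => t ^ a * (1 + max 0 (Real.log t⁻¹)) ^ c * (1 + t) ^ (-s))
      (Set.Ioc 0 1) := by
    have hg : IntegrableOn (fun t : ℝ => K ^ c * t ^ (a - ε * c)) (Set.Ioc 0 1) := by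
      have := (intervalIntegral.intervalIntegrable_rpow' (a := 0) (b := 1)
        (r := a - ε * c) (by nlinarith))
      rw [intervalIntegrable_iff_integrableOn_Ioc_of_le (by norm_num)] at this
      exact this.const_mul _
    refine hg.mono' hmeas.aestronglyMeasurable.restrict ?_
    filter_upwards [ae_restrict_mem measurableSet_Ioc] with t ht
    have ht0 : 0 < t := ht.1
    have hinv1 : 1 ≤ t⁻¹ := (one_le_inv₀ ht0).mpr ht.2
    have hlog0 : 0 ≤ Real.log t⁻¹ := Real.log_nonneg hinv1
    have hmax : max 0 (Real.log t⁻¹) = Real.log t⁻¹ := max_eq_right hlog0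
    have hle1 : Real.log t⁻¹ ≤ (t⁻¹) ^ ε / ε := Real.log_le_rpow_div (by positivity) hε
    have hinvr : (t⁻¹ : ℝ) ^ ε = t ^ (-ε) := by
      rw [Real.inv_rpow ht0.le, ← Real.rpow_neg ht0.le]
    have hone_le : 1 ≤ t ^ (-ε) :=
      Real.one_le_rpow_of_pos_of_le_one_of_nonpos ht0 ht.2 (by linarith)
    have hstep : 1 + max 0 (Real.log t⁻¹) ≤ K * t ^ (-ε) := by
      rw [hmax]
      have : Real.log t⁻¹ ≤ t ^ (-ε) / ε := by rw [← hinvr]; exact hle1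
      rw [hKdef]
      have hεinv : 0 ≤ 1/ε := by positivity
      calc 1 + Real.log t⁻¹ ≤ t ^ (-ε) + t ^ (-ε) / ε := by linarith
      _ = (1 + 1/ε) * t ^ (-ε) := by ring
    have hpow : (1 + max 0 (Real.log t⁻¹)) ^ c ≤ K ^ c * t ^ (-(ε * c)) := by
      have h1 : (1 + max 0 (Real.log t⁻¹)) ^ c ≤ (K * t ^ (-ε)) ^ c :=
        Real.rpow_le_rpow (by positivity) hstep hc
      have h2 : (K * t ^ (-ε)) ^ c = K ^ c * t ^ (-(ε * c)) := by
        rw [Real.mul_rpow hK0.le (Real.rpow_nonneg ht0.le _), ← Real.rpow_mul ht0.le]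
        ring_nf
      linarith [h1, h2.le, h2.ge]
    have hs1 : (1 + t) ^ (-s) ≤ 1 :=
      Real.rpow_le_one_of_one_le_of_nonpos (by linarith) (by linarith)
    have hta : 0 ≤ t ^ a := Real.rpow_nonneg ht0.le _
    have hpm : 0 ≤ (1 + max 0 (Real.log t⁻¹)) ^ c := Real.rpow_nonneg (by positivity) _
    have hsm : 0 ≤ (1 + t) ^ (-s) := Real.rpow_nonneg (by linarith) _
    rw [Real.norm_eq_abs, abs_of_nonneg (by positivity)]
    calc t ^ a * (1 + max 0 (Real.log t⁻¹)) ^ c * (1 + t) ^ (-s)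
        ≤ t ^ a * (K ^ c * t ^ (-(ε * c))) * 1 := by
          apply mul_le_mul (mul_le_mul le_rfl hpow hpm hta) hs1 hsm (by positivity)
      _ = K ^ c * (t ^ a * t ^ (-(ε * c))) := by ring
      _ = K ^ c * t ^ (a - ε * c) := by rw [← Real.rpow_add ht0]; ring_nf
  have h1i : IntegrableOn
      (fun t : ℝ => t ^ a * (1 + max 0 (Real.log t⁻¹)) ^ c * (1 + t) ^ (-s))
      (Set.Ioi 1) := by
    refine (((integrableOn_pow_tail ha hs).mono_set
      (Set.Ioi_subset_Ioi (by norm_num))).congr_fun ?_ measurableSet_Ioi)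
    intro t ht
    have ht1 : (1:ℝ) < t := ht
    have : Real.log t⁻¹ ≤ 0 := Real.log_nonpos (by positivity) (by
      rw [inv_le_one_iff₀]; right; exact ht1.le)
    have hmx : max 0 (Real.log t⁻¹) = 0 := max_eq_left this
    rw [Real.log_inv] at hmx
    simp [hmx]
  have : Set.Ioi (0:ℝ) = Set.Ioc 0 1 ∪ Set.Ioi 1 := (Set.Ioc_union_Ioi_eq_Ioi (by norm_num)).symm
  rw [this]
  exact h01.union h1i


lemma integral_pow_tail_pos {a s : ℝ} (ha : -1 < a) (hs : a + 1 < s) :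
    0 < ∫ t in Set.Ioi (0:ℝ), t ^ a * (1 + t) ^ (-s) := by
  rw [setIntegral_pos_iff_support_of_nonneg_ae ?hf (integrableOn_pow_tail ha hs)]
  case hf =>
    filter_upwards [ae_restrict_mem measurableSet_Ioi] with t ht
    exact mul_nonneg (Real.rpow_nonneg (le_of_lt ht) _)
      (Real.rpow_nonneg (by simp only [Set.mem_Ioi] at ht; linarith) _)
  refine lt_of_lt_of_le ?_ (measure_mono (fun t ht => ⟨?_, ht⟩))
  · simp [Real.volume_Ioi]
  · have ht0 : (0:ℝ) < t := ht
    have : 0 < t ^ a * (1 + t) ^ (-s) :=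
      mul_pos (Real.rpow_pos_of_pos ht0 _) (Real.rpow_pos_of_pos (by linarith) _)
    exact Function.mem_support.mpr (ne_of_gt this)

lemma ibp_identity {a s : ℝ} (ha : -1 < a) (hs : a + 1 < s) :
    (a + 1 - s) * (∫ t in Set.Ioi (0:ℝ), t ^ a * (1 + t) ^ (-s))
      + s * (∫ t in Set.Ioi (0:ℝ), t ^ a * (1 + t) ^ (-(s+1))) = 0 := by
  have hs0 : 0 < s := by linarith
  set f : ℝ → ℝ := fun t => t ^ (a+1) * (1+t) ^ (-s) with hfdef
  set g : ℝ → ℝ := fun t =>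
    (a + 1 - s) * (t ^ a * (1 + t) ^ (-s)) + s * (t ^ a * (1 + t) ^ (-(s+1))) with hgdef
  have hderiv : ∀ t ∈ Set.Ioi (0:ℝ), HasDerivAt f (g t) t := by
    intro t ht
    have ht0 : (0:ℝ) < t := ht
    have h1t : (0:ℝ) < 1 + t := by linarith
    have h1 : HasDerivAt (fun t : ℝ => t ^ (a+1)) ((a+1) * t ^ a) t := by
      have := Real.hasDerivAt_rpow_const (x := t) (p := a+1) (Or.inl ht0.ne')
      convert this using 2
      ring_nf
    have h2 : HasDerivAt (fun t : ℝ => (1+t) ^ (-s)) (-s * (1+t) ^ (-s-1)) t := by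
      have hd : HasDerivAt (fun t : ℝ => 1 + t) 1 t := (hasDerivAt_id t).const_add 1
      have := hd.rpow_const (p := -s) (Or.inl h1t.ne')
      simpa using this
    have hmul := h1.mul h2
    refine HasDerivAt.congr_deriv hmul ?_
    have e1 : t ^ (a+1) = t ^ a * t := Real.rpow_add_one ht0.ne' a
    have e2 : (1+t) ^ (-s) = (1+t) ^ (-s-1) * (1+t) := by
      have := Real.rpow_add_one h1t.ne' (-s-1)
      rw [show -s-1+1 = -s by ring] at this
      exact this
    have e3 : (1+t) ^ (-(s+1)) = (1+t) ^ (-s-1) := by congr 1; ring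
    rw [hgdef]
    simp only []
    rw [e1, e2, e3]
    ring
  have hint1 : IntegrableOn (fun t : ℝ => t ^ a * (1 + t) ^ (-s)) (Set.Ioi 0) :=
    integrableOn_pow_tail ha hs
  have hint2 : IntegrableOn (fun t : ℝ => t ^ a * (1 + t) ^ (-(s+1))) (Set.Ioi 0) :=
    integrableOn_pow_tail ha (by linarith)
  have hint : IntegrableOn g (Set.Ioi 0) := by
    rw [hgdef]
    exact (hint1.const_mul _).add (hint2.const_mul _)
  have hcont : ContinuousWithinAt f (Set.Ici 0) 0 := by
    have c1 : ContinuousAt (fun t : ℝ => t ^ (a+1)) 0 :=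
      Real.continuousAt_rpow_const 0 (a+1) (Or.inr (by linarith))
    have c2 : ContinuousAt (fun t : ℝ => (1+t) ^ (-s)) 0 := by
      have h := Real.continuousAt_rpow_const ((1:ℝ)+0) (-s) (Or.inl (by norm_num))
      exact h.comp ((continuous_const.add continuous_id).continuousAt)
    exact (c1.mul c2).continuousWithinAt
  have htop : Tendsto f atTop (nhds 0) := by
    have hlim : Tendsto (fun t : ℝ => t ^ (a+1-s)) atTop (nhds 0) := by
      have := tendsto_rpow_neg_atTop (y := s - (a+1)) (by linarith)
      simpa [show -(s-(a+1)) = a+1-s by ring] using this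
    refine tendsto_of_tendsto_of_tendsto_of_le_of_le' tendsto_const_nhds hlim ?_ ?_
    · filter_upwards [eventually_ge_atTop (1:ℝ)] with t ht
      exact mul_nonneg (Real.rpow_nonneg (by linarith) _) (Real.rpow_nonneg (by linarith) _)
    · filter_upwards [eventually_ge_atTop (1:ℝ)] with t ht
      have ht0 : (0:ℝ) < t := by linarith
      have h1 : (1 + t) ^ (-s) ≤ t ^ (-s) :=
        Real.rpow_le_rpow_of_nonpos ht0 (by linarith) (by linarith)
      have h2 : 0 ≤ t ^ (a+1) := Real.rpow_nonneg ht0.le _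
      calc t ^ (a+1) * (1+t) ^ (-s) ≤ t ^ (a+1) * t ^ (-s) :=
            mul_le_mul_of_nonneg_left h1 h2
        _ = t ^ (a+1-s) := by rw [← Real.rpow_add ht0]; ring_nf
  have key := integral_Ioi_of_hasDerivAt_of_tendsto hcont hderiv hint htop
  have hf0 : f 0 = 0 := by
    rw [hfdef]
    simp [Real.zero_rpow (show a+1 ≠ 0 by linarith)]
  rw [hf0, sub_zero] at key
  have hsplit : ∫ t in Set.Ioi (0:ℝ), g t
      = (a + 1 - s) * (∫ t in Set.Ioi (0:ℝ), t ^ a * (1 + t) ^ (-s))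
        + s * (∫ t in Set.Ioi (0:ℝ), t ^ a * (1 + t) ^ (-(s+1))) := by
    rw [hgdef]
    rw [integral_add (hint1.const_mul _) (hint2.const_mul _),
      integral_const_mul, integral_const_mul]
  rw [hsplit] at key
  linarith [key]


lemma key_limit {a c s : ℝ} (ha : -1 < a) (hc : 0 ≤ c) (hs : a + 1 < s) :
    Tendsto (fun w : ℝ => (Real.log w) ^ (-c) * w ^ (a+1) *
        ∫ l in Set.Ioo (0:ℝ) 1, l ^ a * Real.log (1/l) ^ c * (1 + w*l) ^ (-s)) atTop
      (nhds (∫ t in Set.Ioi (0:ℝ), t ^ a * (1+t) ^ (-s))) := by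
  set inner : ℝ → ℝ → ℝ := fun w t =>
    t ^ a * ((Real.log w - Real.log t)/Real.log w) ^ c * (1 + t) ^ (-s) with hinner
  set F : ℝ → ℝ → ℝ := fun w t => Set.indicator (Set.Ioo 0 w) (inner w) t with hF
  -- Step A: dominated convergence
  have stepA : Tendsto (fun w : ℝ => ∫ t in Set.Ioi (0:ℝ), F w t) atTop
      (nhds (∫ t in Set.Ioi (0:ℝ), t ^ a * (1+t) ^ (-s))) := by
    apply tendsto_integral_filter_of_dominated_convergence
      (bound := fun t : ℝ => t ^ a * (1 + max 0 (Real.log t⁻¹)) ^ c * (1 + t) ^ (-s))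
    · filter_upwards with w
      have m1 : Measurable fun t : ℝ => (Real.log w - Real.log t)/Real.log w := by
        apply Measurable.div_const
        exact measurable_const.sub Real.measurable_log
      have m2 : Measurable (inner w) := by rw [hinner]; fun_prop
      exact (m2.indicator measurableSet_Ioo).aestronglyMeasurable
    · filter_upwards [eventually_ge_atTop (Real.exp 1)] with w hw
      have hw1 : (1:ℝ) < w := lt_of_lt_of_le (by linarith [Real.add_one_le_exp 1]) hw
      have hlogw : 1 ≤ Real.log w := by
        rw [← Real.log_exp 1]
        exact (Real.log_le_log_iff (Real.exp_pos 1) (by linarith)).mpr hw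
      have hlogw0 : 0 < Real.log w := by linarith
      filter_upwards [ae_restrict_mem measurableSet_Ioi] with t ht
      have ht0 : (0:ℝ) < t := ht
      have hbdd0 : 0 ≤ (1 + max 0 (Real.log t⁻¹)) := by positivity
      by_cases htw : t ∈ Set.Ioo 0 w
      · rw [hF]
        simp only [Set.indicator_of_mem htw]
        have hlt : Real.log t ≤ Real.log w :=
          (Real.log_le_log_iff ht0 (by linarith)).mpr htw.2.le
        have hr0 : 0 ≤ (Real.log w - Real.log t)/Real.log w :=
          div_nonneg (by linarith) hlogw0.le
        have hratio : (Real.log w - Real.log t)/Real.log w ≤ 1 + max 0 (Real.log t⁻¹) := by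
          rcases le_or_gt 1 t with h1 | h1
          · have hl0 : 0 ≤ Real.log t := Real.log_nonneg h1
            have hle1 : (Real.log w - Real.log t)/Real.log w ≤ 1 := by
              rw [div_le_one hlogw0]; linarith
            have hmax0 : (0:ℝ) ≤ max 0 (Real.log t⁻¹) := le_max_left _ _
            linarith
          · have hl1 : 0 ≤ Real.log t⁻¹ := by
              rw [Real.log_inv]
              have : Real.log t ≤ 0 := Real.log_nonpos ht0.le h1.le
              linarith
            rw [max_eq_right hl1, Real.log_inv] at *
            rw [div_le_iff₀ hlogw0]
            nlinarith
        have hrpow : ((Real.log w - Real.log t)/Real.log w) ^ c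
            ≤ (1 + max 0 (Real.log t⁻¹)) ^ c := Real.rpow_le_rpow hr0 hratio hc
        have hta : 0 ≤ t ^ a := Real.rpow_nonneg ht0.le _
        have hts : 0 ≤ (1+t) ^ (-s) := Real.rpow_nonneg (by linarith) _
        have hrp0 : 0 ≤ ((Real.log w - Real.log t)/Real.log w) ^ c := Real.rpow_nonneg hr0 _
        rw [Real.norm_eq_abs, abs_of_nonneg (by positivity)]
        apply mul_le_mul (mul_le_mul le_rfl hrpow hrp0 hta) le_rfl hts
        positivity
      · rw [hF]
        simp only [Set.indicator_of_notMem htw]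
        simp only [norm_zero]
        positivity
    · exact integrableOn_bound ha hc hs
    · filter_upwards [ae_restrict_mem measurableSet_Ioi] with t ht
      have ht0 : (0:ℝ) < t := ht
      have hev : ∀ᶠ w in atTop, F w t = inner w t := by
        filter_upwards [eventually_gt_atTop t] with w hwt
        rw [hF]
        exact Set.indicator_of_mem (Set.mem_Ioo.mpr ⟨ht0, hwt⟩) (inner w)
      have hdiv : Tendsto (fun w : ℝ => Real.log t / Real.log w) atTop (nhds 0) :=
        Tendsto.div_atTop tendsto_const_nhds Real.tendsto_log_atTop
      have hratio : Tendsto (fun w : ℝ => (Real.log w - Real.log t)/Real.log w) atTop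
          (nhds 1) := by
        have h1 : Tendsto (fun w : ℝ => 1 - Real.log t / Real.log w) atTop (nhds 1) := by
          simpa using tendsto_const_nhds.sub hdiv
        apply h1.congr'
        filter_upwards [eventually_ge_atTop (Real.exp 1)] with w hw
        have hlogw0 : 0 < Real.log w := by
          have hw1 : (1:ℝ) < w := lt_of_lt_of_le (by linarith [Real.add_one_le_exp 1]) hw
          exact Real.log_pos hw1
        field_simp
      have hpow : Tendsto (fun w : ℝ => ((Real.log w - Real.log t)/Real.log w) ^ c) atTop
          (nhds 1) := by
        have hcont : ContinuousAt (fun x : ℝ => x ^ c) 1 :=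
          Real.continuousAt_rpow_const 1 c (Or.inl one_ne_zero)
        have := hcont.tendsto.comp hratio
        simpa [Real.one_rpow, Function.comp_def] using this
      have : Tendsto (fun w : ℝ => inner w t) atTop (nhds (t ^ a * (1+t) ^ (-s))) := by
        rw [hinner]
        have := (tendsto_const_nhds (x := t ^ a)).mul hpow
        have := this.mul (tendsto_const_nhds (x := (1+t) ^ (-s)))
        simpa using this
      exact this.congr' (hev.mono fun w h => h.symm)
  -- Step B: change of variables, eventual equality
  have stepB : ∀ w : ℝ, 2 ≤ w →
      (Real.log w) ^ (-c) * w ^ (a+1) *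
        (∫ l in Set.Ioo (0:ℝ) 1, l ^ a * Real.log (1/l) ^ c * (1 + w*l) ^ (-s))
      = ∫ t in Set.Ioi (0:ℝ), F w t := by
    intro w hw
    have hw0 : (0:ℝ) < w := by linarith
    have hw1 : (1:ℝ) < w := by linarith
    have hlogw0 : 0 < Real.log w := Real.log_pos hw1
    have h1 : ∫ t in Set.Ioi (0:ℝ), F w t = ∫ t in Set.Ioo (0:ℝ) w, inner w t := by
      rw [hF]
      rw [setIntegral_indicator measurableSet_Ioo,
        Set.inter_eq_right.mpr Set.Ioo_subset_Ioi_self]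
    have h2 : ∫ t in Set.Ioo (0:ℝ) w, inner w t = ∫ t in (0:ℝ)..w, inner w t := by
      rw [intervalIntegral.integral_of_le hw0.le, integral_Ioc_eq_integral_Ioo]
    have h3 : ∫ t in (0:ℝ)..w, inner w t = w • ∫ l in (0:ℝ)..1, inner w (w * l) := by
      have h := intervalIntegral.smul_integral_comp_mul_left (a := (0:ℝ)) (b := (1:ℝ))
        (inner w) w
      rw [mul_zero, mul_one] at h
      exact h.symm
    have h4 : ∫ l in (0:ℝ)..1, inner w (w * l)
        = ∫ l in Set.Ioo (0:ℝ) 1, inner w (w * l) := by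
      rw [intervalIntegral.integral_of_le (by norm_num : (0:ℝ) ≤ 1),
        integral_Ioc_eq_integral_Ioo]
    have h5 : ∫ l in Set.Ioo (0:ℝ) 1, inner w (w * l)
        = ∫ l in Set.Ioo (0:ℝ) 1,
            (w ^ a * (Real.log w) ^ (-c)) *
              (l ^ a * Real.log (1/l) ^ c * (1 + w*l) ^ (-s)) := by
      apply setIntegral_congr_fun measurableSet_Ioo
      intro l hl
      have hl0 : (0:ℝ) < l := hl.1
      have hl1 : l < 1 := hl.2
      have hlinv : 0 ≤ Real.log l⁻¹ := by
        rw [Real.log_inv]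
        have : Real.log l ≤ 0 := Real.log_nonpos hl0.le hl1.le
        linarith
      rw [hinner]
      simp only []
      rw [Real.mul_rpow hw0.le hl0.le, Real.log_mul hw0.ne' hl0.ne']
      have e1 : Real.log w - (Real.log w + Real.log l) = Real.log l⁻¹ := by
        rw [Real.log_inv]; ring
      rw [e1]
      rw [Real.div_rpow hlinv hlogw0.le]
      rw [Real.rpow_neg hlogw0.le]
      rw [one_div]
      ring
    have h6 : ∫ l in Set.Ioo (0:ℝ) 1,
          (w ^ a * (Real.log w) ^ (-c)) *
            (l ^ a * Real.log (1/l) ^ c * (1 + w*l) ^ (-s))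
        = (w ^ a * (Real.log w) ^ (-c)) *
            ∫ l in Set.Ioo (0:ℝ) 1, l ^ a * Real.log (1/l) ^ c * (1 + w*l) ^ (-s) :=
      integral_const_mul _ _
    rw [h1, h2, h3, h4, h5, h6, smul_eq_mul, Real.rpow_add_one hw0.ne']
    ring
  apply stepA.congr'
  filter_upwards [eventually_ge_atTop (2:ℝ)] with w hw
  exact (stepB w hw).symm





/-- For p ≥ 3, n ≥ 3 and b ≥ 1,
lim_{w→∞} (log w) · [∫₀¹ λ^{p/2−2}(log(1/λ))^{b−1}(1+wλ)^{−(p+n)/2} dλ] /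
  [∫₀¹ λ^{p/2−2}(log(1/λ))^b (1+wλ)^{−(p+n)/2−1} dλ] = (p+n)/(n+2). -/
theorem stmt6 (p n : ℝ) (hp : 3 ≤ p) (hn : 3 ≤ n) (b : ℝ) (hb : 1 ≤ b) :
    Tendsto (fun w : ℝ => Real.log w *
      ((∫ l in Set.Ioo (0 : ℝ) 1,
          l ^ (p / 2 - 2) * Real.log (1 / l) ^ (b - 1) * (1 + w * l) ^ (-(p + n) / 2)) /
        (∫ l in Set.Ioo (0 : ℝ) 1,
          l ^ (p / 2 - 2) * Real.log (1 / l) ^ b * (1 + w * l) ^ (-(p + n) / 2 - 1))))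
      atTop (nhds ((p + n) / (n + 2))) := by
  have ha : (-1:ℝ) < p / 2 - 2 := by linarith
  have hs1 : p / 2 - 2 + 1 < (p + n) / 2 := by linarith
  have hs2 : p / 2 - 2 + 1 < (p + n) / 2 + 1 := by linarith
  simp only [show (-(p + n) / 2 : ℝ) = -((p+n)/2) from by ring]
  simp only [show (-((p+n)/2) - 1 : ℝ) = -((p+n)/2 + 1) from by ring]
  have hCN := key_limit (c := b - 1) ha (by linarith) hs1
  have hCD := key_limit (c := b) (s := (p+n)/2 + 1) ha (by linarith) hs2
  have hpos : 0 < ∫ t in Set.Ioi (0:ℝ), t ^ (p/2-2) * (1 + t) ^ (-((p+n)/2 + 1)) :=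
    integral_pow_tail_pos ha hs2
  have hquot := hCN.div hCD hpos.ne'
  have hval : (∫ t in Set.Ioi (0:ℝ), t ^ (p/2-2) * (1 + t) ^ (-((p+n)/2)))
      / (∫ t in Set.Ioi (0:ℝ), t ^ (p/2-2) * (1 + t) ^ (-((p+n)/2 + 1)))
      = (p + n) / (n + 2) := by
    have hibp := ibp_identity ha hs1
    rw [div_eq_div_iff hpos.ne' (by positivity : (n + 2 : ℝ) ≠ 0)]
    nlinarith [hibp]
  rw [← hval]
  apply hquot.congr'
  filter_upwards [eventually_ge_atTop (Real.exp 1)] with w hw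
  have hw1 : (1:ℝ) < w := lt_of_lt_of_le (by linarith [Real.add_one_le_exp 1]) hw
  have hw0 : (0:ℝ) < w := by linarith
  have hlogw0 : 0 < Real.log w := Real.log_pos hw1
  have hu : (0:ℝ) < w ^ (p/2-2+1) := Real.rpow_pos_of_pos hw0 _
  set N := ∫ l in Set.Ioo (0 : ℝ) 1,
      l ^ (p / 2 - 2) * Real.log (1 / l) ^ (b - 1) * (1 + w * l) ^ (-((p + n) / 2))
  set D := ∫ l in Set.Ioo (0 : ℝ) 1,
      l ^ (p / 2 - 2) * Real.log (1 / l) ^ b * (1 + w * l) ^ (-((p + n) / 2 + 1))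
  have hxy : (Real.log w) ^ (-(b-1)) / (Real.log w) ^ (-b) = Real.log w := by
    rw [← Real.rpow_sub hlogw0, show -(b-1) - -b = 1 by ring, Real.rpow_one]
  calc (Real.log w) ^ (-(b-1)) * w ^ (p/2-2+1) * N
        / ((Real.log w) ^ (-b) * w ^ (p/2-2+1) * D)
      = ((Real.log w) ^ (-(b-1)) * w ^ (p/2-2+1)) / ((Real.log w) ^ (-b) * w ^ (p/2-2+1))
          * (N / D) := mul_div_mul_comm _ _ _ _
    _ = ((Real.log w) ^ (-(b-1)) / (Real.log w) ^ (-b)) * (N / D) := by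
        rw [mul_div_mul_right _ _ hu.ne']
    _ = Real.log w * (N / D) := by rw [hxy]
end
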